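/- arXiv:1608.07144 — 3 statements merged into one kernel-verified Lean document; each statement's English description precedes it below -/
import Mathlib

section
/- Let κ be an infinite cardinal with ω₁ ≤ κ. Then there exist a set Z and a free filter p on Z such that the filter space Z_p satisfies ψ(Z_p) = ω₁ and a(Z_p) = κ, yet Z_p does not admit any separately continuous selection relation. -/
open Set

universe u v w y

/-- The filter space topology on `Option X`: every point `some x` is isolated, and the
neighborhoods of the extra point `none` are the sets `P ∪ {none}` with `P ∈ p`. -/
def filterTop {X : Type u} (p : Filter X) : TopologicalSpace (Option X) where
  IsOpen U := none ∈ U → (Option.some ⁻¹' U) ∈ p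
  isOpen_univ := fun _ => by simp
  isOpen_inter := fun U V hU hV h => by
    rw [Set.preimage_inter]
    exact Filter.inter_mem (hU h.1) (hV h.2)
  isOpen_sUnion := fun S hS h => by
    rw [Set.mem_sUnion] at h
    obtain ⟨U, hUS, hU⟩ := h
    exact Filter.mem_of_superset (hS U hUS hU)
      (Set.preimage_mono (Set.subset_sUnion_of_mem hUS))

/-- A filter is free if `∅ ∉ p` and the intersection of all its members is empty. -/
def IsFree {X : Type u} (p : Filter X) : Prop :=
  (∅ : Set X) ∉ p ∧ ⋂₀ {P : Set X | P ∈ p} = ∅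

/-- A family of sets is nested if any two members are comparable under inclusion. -/
def Nested {X : Type u} (F : Set (Set X)) : Prop :=
  ∀ P ∈ F, ∀ Q ∈ F, P ⊆ Q ∨ Q ⊆ P

/-- The order topology of a linear order: generated by the open rays. -/
def ordTop {Z : Type u} (r : LinearOrder Z) : TopologicalSpace Z :=
  TopologicalSpace.generateFrom
    {S : Set Z | ∃ a : Z, S = {z | r.lt z a} ∨ S = {z | r.lt a z}}

/-- `(Z, t)` is weakly orderable by the linear order `r`: the order topology of `r`
is contained in `t`. -/
def WOBy {Z : Type u} (t : TopologicalSpace Z) (r : LinearOrder Z) : Prop :=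
  ∀ S : Set Z, (ordTop r).IsOpen S → t.IsOpen S

def WeaklyOrderable {Z : Type u} (t : TopologicalSpace Z) : Prop :=
  ∃ r : LinearOrder Z, WOBy t r

/-- Weakly `p`-orderable: weakly orderable by a linear order in which `p` is the maximum. -/
def WeaklyPOrderable {Z : Type u} (t : TopologicalSpace Z) (p : Z) : Prop :=
  ∃ r : LinearOrder Z, WOBy t r ∧ ∀ z : Z, r.le z p

def Orderable {Z : Type u} (t : TopologicalSpace Z) : Prop :=
  ∃ r : LinearOrder Z, ordTop r = t

/-- `p`-orderable: orderable by a linear order in which `p` is the maximum. -/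
def POrderable {Z : Type u} (t : TopologicalSpace Z) (p : Z) : Prop :=
  ∃ r : LinearOrder Z, ordTop r = t ∧ ∀ z : Z, r.le z p

/-- The approaching number of a point `p`: the least cardinality of a set
`A ⊆ Z \ {p}` with `p ∈ closure A`. -/
noncomputable def aNum {Z : Type u} (t : TopologicalSpace Z) (p : Z) : Cardinal.{u} :=
  sInf {c : Cardinal.{u} | ∃ A : Set Z, p ∉ A ∧ p ∈ @closure Z t A ∧ c = Cardinal.mk ↥A}

/-- The pseudo-character of a point `p`: the least cardinality of a family of open sets
whose intersection is `{p}`. -/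
noncomputable def psiNum {Z : Type u} (t : TopologicalSpace Z) (p : Z) : Cardinal.{u} :=
  sInf {c : Cardinal.{u} | ∃ Us : Set (Set Z),
    (∀ V ∈ Us, t.IsOpen V) ∧ ⋂₀ Us = {p} ∧ c = Cardinal.mk ↥Us}

/-- The approaching number of a space: minimum over non-isolated points. -/
noncomputable def aSp {Z : Type u} (t : TopologicalSpace Z) : Cardinal.{u} :=
  sInf {c : Cardinal.{u} | ∃ p : Z, ¬ t.IsOpen ({p} : Set Z) ∧ c = aNum t p}

/-- The pseudo-character of a space: supremum over points. -/
noncomputable def psiSp {Z : Type u} (t : TopologicalSpace Z) : Cardinal.{u} :=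
  ⨆ p : Z, psiNum t p

/-- `‖p‖ = min {|P| : P ∈ p}`. -/
noncomputable def fNorm {X : Type u} (p : Filter X) : Cardinal.{u} :=
  sInf {c : Cardinal.{u} | ∃ P ∈ p, c = Cardinal.mk ↥P}

/-- A selection relation: total and antisymmetric. -/
def SelRel {Z : Type u} (R : Z → Z → Prop) : Prop :=
  (∀ x y : Z, R x y ∨ R y x) ∧ (∀ x y : Z, R x y → R y x → x = y)

/-- Separate continuity of a selection relation: the open rays are open. -/
def SepCont {Z : Type u} (t : TopologicalSpace Z) (R : Z → Z → Prop) : Prop :=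
  ∀ x : Z, t.IsOpen {z | R z x ∧ z ≠ x} ∧ t.IsOpen {z | R x z ∧ x ≠ z}

/-- Continuity of a selection relation (Gutev–Nogura characterization). -/
def ContSel {Z : Type u} (t : TopologicalSpace Z) (R : Z → Z → Prop) : Prop :=
  ∀ x y : Z, R x y → x ≠ y →
    ∃ U V : Set Z, t.IsOpen U ∧ t.IsOpen V ∧ x ∈ U ∧ y ∈ V ∧
      ∀ u ∈ U, ∀ v ∈ V, R u v ∧ u ≠ v

/-- The subspace topology. -/
def subTop {Z : Type u} (t : TopologicalSpace Z) (S : Set Z) : TopologicalSpace ↥S :=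
  TopologicalSpace.induced Subtype.val t

/-- The product topology. -/
def prodTop {A : Type u} {B : Type v} (tA : TopologicalSpace A) (tB : TopologicalSpace B) :
    TopologicalSpace (A × B) :=
  TopologicalSpace.induced Prod.fst tA ⊓ TopologicalSpace.induced Prod.snd tB

/-- `C` is a club (closed unbounded) subset of the ordinal `o`. -/
def Club (o : Ordinal.{u}) (C : Set Ordinal.{u}) : Prop :=
  C ⊆ Set.Iio o ∧ (∀ α < o, ∃ β ∈ C, α ≤ β) ∧
  (∀ α < o, (α ≠ 0 ∧ ∀ a < α, Order.succ a < α) → (∀ β < α, ∃ γ ∈ C, β ≤ γ ∧ γ < α) → α ∈ C)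

/-- `S` is a stationary subset of the ordinal `o`. -/
def StationaryIn (o : Ordinal.{u}) (S : Set Ordinal.{u}) : Prop :=
  S ⊆ Set.Iio o ∧ ∀ C : Set Ordinal.{u}, Club o C → (S ∩ C).Nonempty

lemma isOpen_filterTop_iff {X : Type u} (p : Filter X) (U : Set (Option X)) :
    (filterTop p).IsOpen U ↔ (none ∈ U → (Option.some ⁻¹' U) ∈ p) := Iff.rfl

namespace Stmt11Aux
open Cardinal

variable {κ : Cardinal.{u}}

def J : Type u := (Cardinal.aleph 1 : Cardinal.{u}).out

lemma mk_J : #(J.{u}) = Cardinal.aleph 1 := Cardinal.mk_out _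

noncomputable instance : DecidableEq J.{u} := Classical.decEq _

instance : Infinite J.{u} := by
  rw [Cardinal.infinite_iff, mk_J]
  exact aleph0_lt_aleph_one.le

def W (κ : Cardinal.{u}) : Type u := (Order.succ κ).out

lemma mk_W : #(W κ) = Order.succ κ := Cardinal.mk_out _

lemma lt_mk_W : κ < #(W κ) := by rw [mk_W]; exact Order.lt_succ κ

instance : Nonempty (W κ) := by
  rw [← Cardinal.mk_ne_zero_iff, mk_W]
  exact ((Cardinal.zero_le κ).trans_lt (Order.lt_succ κ)).ne'

abbrev Z (κ : Cardinal.{u}) : Type u := W κ × J.{u}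

/-- The "bad set" of `P` relative to a finite set `F` of columns. -/
def bad (κ : Cardinal.{u}) (P : Set (Z κ)) (F : Finset J.{u}) : Set (Z κ) :=
  {z | z ∉ P ∧ z.2 ∉ F}

def p (κ : Cardinal.{u}) (hκ0 : ℵ₀ ≤ κ) : Filter (Z κ) where
  sets := {P | ∃ F : Finset J.{u}, #(bad κ P F) < κ}
  univ_sets := ⟨∅, by
    have : bad κ univ ∅ = ∅ := by ext z; simp [bad]
    rw [this, Cardinal.mk_emptyCollection]
    exact (aleph0_pos).trans_le hκ0⟩
  sets_of_superset := by
    rintro P Q ⟨F, hF⟩ hPQ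
    refine ⟨F, lt_of_le_of_lt (Cardinal.mk_le_mk_of_subset ?_) hF⟩
    intro z hz
    exact ⟨fun h => hz.1 (hPQ h), hz.2⟩
  inter_sets := by
    rintro P Q ⟨F, hF⟩ ⟨G, hG⟩
    refine ⟨F ∪ G, ?_⟩
    have hsub : bad κ (P ∩ Q) (F ∪ G) ⊆ bad κ P F ∪ bad κ Q G := by
      rintro z ⟨hz1, hz2⟩
      simp only [Finset.mem_union, not_or] at hz2
      by_cases hzP : z ∈ P
      · exact Or.inr ⟨fun h => hz1 ⟨hzP, h⟩, hz2.2⟩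
      · exact Or.inl ⟨hzP, hz2.1⟩
    calc #(bad κ (P ∩ Q) (F ∪ G)) ≤ #(bad κ P F ∪ bad κ Q G : Set (Z κ)) :=
          Cardinal.mk_le_mk_of_subset hsub
      _ ≤ #(bad κ P F) + #(bad κ Q G) := Cardinal.mk_union_le _ _
      _ < κ := Cardinal.add_lt_of_lt hκ0 hF hG

lemma mem_p {hκ0 : ℵ₀ ≤ κ} {P : Set (Z κ)} :
    P ∈ p κ hκ0 ↔ ∃ F : Finset J.{u}, #(bad κ P F) < κ := Iff.rfl

/-- Anything in `p` meets every set whose complement-trace is small... basic: a set whose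
complement has size `< κ` is in `p`. -/
lemma compl_small_mem {hκ0 : ℵ₀ ≤ κ} {A : Set (Z κ)} (h : #A < κ) : Aᶜ ∈ p κ hκ0 := by
  refine ⟨∅, lt_of_le_of_lt (Cardinal.mk_le_mk_of_subset ?_) h⟩
  rintro z ⟨hz, -⟩
  simpa using hz

/-- The column of index `j`. -/
def col (κ : Cardinal.{u}) (j : J.{u}) : Set (Z κ) := {z | z.2 = j}

lemma mk_col (j : J.{u}) : #(col κ j) = Order.succ κ := by
  rw [← mk_W (κ := κ)]
  exact Cardinal.mk_congr
    ⟨fun z => z.1.1, fun w => ⟨(w, j), rfl⟩,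
     fun z => by rcases z with ⟨⟨w, j'⟩, hz⟩; cases hz; rfl,
     fun w => rfl⟩

lemma pigeon {α β : Type u} (hκ0 : ℵ₀ ≤ κ) (s : Set α) (g : α → β)
    (hβ : #β ≤ κ) (hs : κ < #s) : ∃ b, κ < #{x | x ∈ s ∧ g x = b} := by
  by_contra hcon
  push_neg at hcon
  have h1 : #s = Cardinal.sum fun b => #{x | x ∈ s ∧ g x = b} := by
    have e1 : s ≃ Σ b, {y : s // g y.1 = b} := (Equiv.sigmaFiberEquiv fun y : s => g y.1).symm
    rw [Cardinal.mk_congr e1, Cardinal.mk_sigma]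
    congr 1
    funext b
    exact Cardinal.mk_congr (Equiv.subtypeSubtypeEquivSubtypeInter (· ∈ s) (g · = b))
  have h2 : #s ≤ #β * κ := by
    rw [h1, ← Cardinal.sum_const']
    exact Cardinal.sum_le_sum _ _ hcon
  have h3 : #β * κ ≤ κ := by
    calc #β * κ ≤ κ * κ := by exact mul_le_mul' hβ le_rfl
      _ = κ := Cardinal.mul_eq_self hκ0
  exact absurd (h2.trans h3) (not_le.2 hs)

lemma diff_nonempty {α : Type u} {s t : Set α} (h : #t < #s) : (s \ t).Nonempty := by
  rw [Set.nonempty_iff_ne_empty]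
  intro he
  rw [Set.diff_eq_empty] at he
  exact absurd (Cardinal.mk_le_mk_of_subset he) (not_le.2 h)

end Stmt11Aux

namespace Stmt11Aux
open Cardinal

variable {κ : Cardinal.{u}}

/-- The key combinatorial lemma: if `S` carries a family of `p`-sets that is pairwise
non-mutual, then the set of columns in which `S` is large is countable. -/
lemma main_comb (hκ1 : Cardinal.aleph 1 ≤ κ) (hκ0 : ℵ₀ ≤ κ)
    (S : Set (Z κ)) (Fam : Z κ → Set (Z κ))
    (hFam : ∀ x, Fam x ∈ p κ hκ0)
    (hnm : ∀ x ∈ S, ∀ y ∈ S, x ≠ y → ¬(y ∈ Fam x ∧ x ∈ Fam y))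
    (hT : ¬ ({j : J.{u} | κ < #{z | z ∈ S ∧ z.2 = j}}).Countable) : False := by
  classical
  choose F hF using fun x => hFam x
  set T : Set J.{u} := {j | κ < #{z | z ∈ S ∧ z.2 = j}} with hTdef
  have hTinf : T.Infinite := fun hfin => hT hfin.countable
  -- uniformize the finite column-sets on each large column
  have key : ∀ j ∈ T, ∃ Fj : Finset J.{u},
      κ < #{x | x ∈ {z | z ∈ S ∧ z.2 = j} ∧ F x = Fj} := by
    intro j hj
    refine pigeon hκ0 _ F ?_ hj
    rw [Cardinal.mk_finset_of_infinite, mk_J]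
    exact hκ1
  choose! Fst hFst using key
  set Y : J.{u} → Set (Z κ) := fun j => {x | x ∈ {z | z ∈ S ∧ z.2 = j} ∧ F x = Fst j}
    with hYdef
  -- countably many large columns
  let e : ℕ ↪ T := hTinf.natEmbedding T
  -- a column avoiding all their finite sets and indices
  set JJ : Set J.{u} := (⋃ n, (Fst (e n) : Set J.{u})) ∪ Set.range (fun n => (e n : J.{u}))
    with hJJdef
  have hJJc : JJ.Countable :=
    (Set.countable_iUnion fun n => (Fst (e n)).finite_toSet.countable).union
      (Set.countable_range _)
  have hkex : (T \ JJ).Nonempty := by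
    rw [Set.nonempty_iff_ne_empty]
    intro he
    rw [Set.diff_eq_empty] at he
    exact hT (hJJc.mono he)
  obtain ⟨k, hkT, hkJJ⟩ := hkex
  -- a large column whose index avoids `Fst k`
  have hnex : ∃ n, (e n : J.{u}) ∉ Fst k := by
    by_contra hcon
    push_neg at hcon
    have hsub : Set.range (fun n => (e n : J.{u})) ⊆ (Fst k : Set J.{u}) := by
      rintro j ⟨n, rfl⟩; exact hcon n
    have hinj : Function.Injective (fun n => (e n : J.{u})) :=
      fun a b hab => e.injective (Subtype.ext hab)
    exact (Set.infinite_range_of_injective hinj) ((Fst k).finite_toSet.subset hsub)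
  obtain ⟨n, hnk⟩ := hnex
  set a : J.{u} := (e n : J.{u}) with hadef
  have haT : a ∈ T := (e n).2
  have hka : k ∉ (Fst a : Set J.{u}) := by
    intro hk
    exact hkJJ (Or.inl (Set.mem_iUnion.2 ⟨n, hk⟩))
  have hak : a ≠ k := by
    intro h
    exact hkJJ (Or.inr ⟨n, h⟩)
  -- pick κ many points in column a
  obtain ⟨A, hAsub, hAmk⟩ := Cardinal.le_mk_iff_exists_subset.mp (hFst a haT).le
  -- the union of their bad sets is small
  have hsmk : #(⋃ x : A, bad κ (Fam x) (F x)) ≤ κ := by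
    calc #(⋃ x : A, bad κ (Fam x) (F x))
        ≤ Cardinal.sum fun x : A => #(bad κ (Fam x) (F x)) := Cardinal.mk_iUnion_le_sum_mk
      _ ≤ Cardinal.sum fun _ : A => κ := Cardinal.sum_le_sum _ _ fun x => (hF x).le
      _ = #A * κ := Cardinal.sum_const' _ _
      _ = κ := by rw [hAmk, Cardinal.mul_eq_self hκ0]
  -- pick y in column k avoiding all those bad sets
  have hy : (Y k \ ⋃ x : A, bad κ (Fam x) (F x)).Nonempty :=
    diff_nonempty (hsmk.trans_lt (hFst k hkT))
  obtain ⟨y, hyY, hys⟩ := hy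
  -- pick x in A avoiding y's bad set
  have hx : (A \ bad κ (Fam y) (F y)).Nonempty := by
    refine diff_nonempty ?_
    rw [hAmk]
    exact hF y
  obtain ⟨x, hxA, hxbad⟩ := hx
  have hxY : x ∈ Y a := hAsub hxA
  obtain ⟨⟨hxS, hx2⟩, hxF⟩ := hxY
  obtain ⟨⟨hyS, hy2⟩, hyF⟩ := hyY
  have hxy : x ≠ y := by
    intro h
    rw [h, hy2] at hx2
    exact hak hx2.symm
  have h1 : y ∈ Fam x := by
    by_contra hyP
    have : y ∈ bad κ (Fam x) (F x) := ⟨hyP, by rw [hxF, hy2]; exact fun hc => hka hc⟩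
    exact hys (Set.mem_iUnion.2 ⟨⟨x, hxA⟩, this⟩)
  have h2 : x ∈ Fam y := by
    by_contra hxP
    exact hxbad ⟨hxP, by rw [hyF, hx2]; exact fun hc => hnk hc⟩
  exact hnm x hxS y hyS hxy ⟨h1, h2⟩

end Stmt11Aux


open Cardinal

/-- For every infinite cardinal `κ ≥ ω₁` there is a set `Z` and a free filter
`p` on `Z` with `ψ(Z_p) = ω₁`, `a(Z_p) = κ`, and `Z_p` admitting no separately continuous
selection relation. -/
theorem stmt11 (κ : Cardinal.{u}) (hκ : Cardinal.aleph 1 ≤ κ) :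
    ∃ (Z : Type u) (p : Filter Z), IsFree p ∧
      psiNum (filterTop p) (none : Option Z) = Cardinal.aleph 1 ∧
      aNum (filterTop p) (none : Option Z) = κ ∧
      ¬ ∃ R : Option Z → Option Z → Prop, SelRel R ∧ SepCont (filterTop p) R := by
  classical
  have hκ0 : Cardinal.aleph0 ≤ κ := Cardinal.aleph0_lt_aleph_one.le.trans hκ
  have hpre : ∀ S : Set (Stmt11Aux.Z κ),
      (Option.some ⁻¹' (insert none (Option.some '' S))) = S := by
    intro S; ext z; simp
  have hmemcl : ∀ (A : Set (Option (Stmt11Aux.Z κ))) (o : Option (Stmt11Aux.Z κ)),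
      o ∈ @closure _ (filterTop (Stmt11Aux.p κ hκ0)) A ↔
        ∀ U, (filterTop (Stmt11Aux.p κ hκ0)).IsOpen U → o ∈ U → (U ∩ A).Nonempty := by
    intro A o
    letI := filterTop (Stmt11Aux.p κ hκ0)
    exact mem_closure_iff
  refine ⟨Stmt11Aux.Z κ, Stmt11Aux.p κ hκ0, ⟨?_, ?_⟩, ?_, ?_, ?_⟩
  · -- ∅ ∉ p
    rintro ⟨F, hF⟩
    obtain ⟨j0, hj0⟩ := Infinite.exists_notMem_finset F
    have hinj : Function.Injective
        (fun w : Stmt11Aux.W κ =>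
          (⟨(w, j0), Set.notMem_empty _, hj0⟩ :
            Stmt11Aux.bad κ (∅ : Set (Stmt11Aux.Z κ)) F)) := by
      intro a b h
      have h2 := congrArg Subtype.val h
      exact (Prod.ext_iff.1 h2).1
    have h1 : #(Stmt11Aux.W κ) ≤ #(Stmt11Aux.bad κ (∅ : Set (Stmt11Aux.Z κ)) F) :=
      Cardinal.mk_le_of_injective hinj
    have h2 : Order.succ κ < κ := by
      rw [← Stmt11Aux.mk_W]
      exact h1.trans_lt hF
    exact absurd h2 (not_lt.2 (Order.lt_succ κ).le)
  · -- ⋂₀ {P ∈ p} = ∅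
    ext z
    simp only [Set.mem_sInter, Set.mem_setOf_eq, Set.mem_empty_iff_false, iff_false, not_forall]
    refine ⟨{z}ᶜ, Stmt11Aux.compl_small_mem ?_, fun h => h rfl⟩
    rw [Cardinal.mk_singleton]
    exact Cardinal.one_lt_aleph0.trans_le hκ0
  · -- psiNum = aleph 1
    have hmem : Cardinal.aleph 1 ∈ {c : Cardinal.{u} | ∃ Us : Set (Set (Option (Stmt11Aux.Z κ))),
        (∀ V ∈ Us, (filterTop (Stmt11Aux.p κ hκ0)).IsOpen V) ∧
        ⋂₀ Us = {(none : Option (Stmt11Aux.Z κ))} ∧ c = Cardinal.mk ↥Us} := by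
      refine ⟨Set.range (fun j : Stmt11Aux.J.{u} =>
        insert none (Option.some '' {z : Stmt11Aux.Z κ | z.2 ≠ j})), ?_, ?_, ?_⟩
      · rintro V ⟨j, rfl⟩
        rw [isOpen_filterTop_iff]
        intro _
        rw [hpre]
        refine ⟨{j}, ?_⟩
        have he : Stmt11Aux.bad κ {z : Stmt11Aux.Z κ | z.2 ≠ j} {j} = ∅ := by
          ext z
          simp [Stmt11Aux.bad]
        rw [he, Cardinal.mk_emptyCollection]
        exact Cardinal.aleph0_pos.trans_le hκ0
      · ext o
        simp only [Set.mem_sInter, Set.mem_range, forall_exists_index, Set.mem_singleton_iff]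
        constructor
        · intro hall
          cases o with
          | none => rfl
          | some z =>
            have hz := hall _ z.2 rfl
            rcases Set.mem_insert_iff.1 hz with h | ⟨z', hz', hz'eq⟩
            · exact absurd h (Option.some_ne_none z)
            · have hzz : z' = z := Option.some_injective _ hz'eq
              rw [hzz] at hz'
              exact absurd rfl hz'
        · rintro rfl V j rfl
          exact Set.mem_insert _ _
      · rw [Cardinal.mk_range_eq _ ?_, Stmt11Aux.mk_J]
        intro j j' hjj
        by_contra hne
        obtain ⟨w⟩ := (inferInstance : Nonempty (Stmt11Aux.W κ))
        have hmem2 : (some ((w, j') : Stmt11Aux.Z κ)) ∈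
            insert (none : Option (Stmt11Aux.Z κ))
              (Option.some '' {z : Stmt11Aux.Z κ | z.2 ≠ j}) :=
          Set.mem_insert_iff.2 (Or.inr ⟨(w, j'), fun h => hne (by exact h.symm), rfl⟩)
        have hjj2 : (insert (none : Option (Stmt11Aux.Z κ))
            (Option.some '' {z : Stmt11Aux.Z κ | z.2 ≠ j}) : Set (Option (Stmt11Aux.Z κ))) =
            insert none (Option.some '' {z : Stmt11Aux.Z κ | z.2 ≠ j'}) := hjj
        rw [hjj2] at hmem2
        rcases Set.mem_insert_iff.1 hmem2 with h | ⟨z', hz', hz'eq⟩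
        · exact Option.some_ne_none _ h
        · have hzz : z' = (w, j') := Option.some_injective _ hz'eq
          rw [hzz] at hz'
          exact hz' rfl
    unfold psiNum
    refine le_antisymm (csInf_le' hmem) (le_csInf ⟨_, hmem⟩ ?_)
    rintro c ⟨Us, hopen, hinter, rfl⟩
    by_contra hlt
    rw [not_le] at hlt
    have hUsC : Us.Countable := (Cardinal.countable_iff_lt_aleph_one Us).2 hlt
    haveI := hUsC.to_subtype
    have hnone : ∀ V ∈ Us, (none : Option (Stmt11Aux.Z κ)) ∈ V := by
      intro V hV
      have hn : (none : Option (Stmt11Aux.Z κ)) ∈ ⋂₀ Us := by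
        rw [hinter]; rfl
      exact hn V hV
    have hmemp : ∀ V : Us, ∃ F : Finset Stmt11Aux.J.{u},
        #(Stmt11Aux.bad κ (Option.some ⁻¹' (V : Set (Option (Stmt11Aux.Z κ)))) F) < κ :=
      fun V => (isOpen_filterTop_iff _ _).1 (hopen V V.2) (hnone V V.2)
    choose FF hFF using hmemp
    have hJJc : (⋃ V : Us, (FF V : Set Stmt11Aux.J.{u})).Countable :=
      Set.countable_iUnion fun V => (FF V).finite_toSet.countable
    have hjex : ∃ j : Stmt11Aux.J.{u}, j ∉ ⋃ V : Us, (FF V : Set Stmt11Aux.J.{u}) := by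
      by_contra hcon
      push_neg at hcon
      have huniv : (Set.univ : Set Stmt11Aux.J.{u}).Countable :=
        hJJc.mono fun j _ => hcon j
      rw [Cardinal.countable_iff_lt_aleph_one, Cardinal.mk_univ, Stmt11Aux.mk_J] at huniv
      exact lt_irrefl _ huniv
    obtain ⟨jstar, hjstar⟩ := hjex
    have hwex : ∃ w : Stmt11Aux.W κ, ∀ V : Us,
        ((w, jstar) : Stmt11Aux.Z κ) ∈
          Option.some ⁻¹' (V : Set (Option (Stmt11Aux.Z κ))) := by
      by_contra hcon
      push_neg at hcon
      choose VV hVV using hcon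
      have hsub : (Set.univ : Set (Stmt11Aux.W κ)) ⊆
          ⋃ V : Us, {w : Stmt11Aux.W κ |
            ((w, jstar) : Stmt11Aux.Z κ) ∈
              Stmt11Aux.bad κ (Option.some ⁻¹' (V : Set (Option (Stmt11Aux.Z κ)))) (FF V)} := by
        intro w _
        exact Set.mem_iUnion.2
          ⟨VV w, hVV w, fun hc => hjstar (Set.mem_iUnion.2 ⟨VV w, hc⟩)⟩
      have hble : ∀ V : Us, #({w : Stmt11Aux.W κ |
          ((w, jstar) : Stmt11Aux.Z κ) ∈
            Stmt11Aux.bad κ (Option.some ⁻¹' (V : Set (Option (Stmt11Aux.Z κ)))) (FF V)}) ≤ κ := by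
        intro V
        refine le_of_lt (lt_of_le_of_lt (Cardinal.mk_le_of_injective
          (f := fun wc : {w : Stmt11Aux.W κ |
            ((w, jstar) : Stmt11Aux.Z κ) ∈
              Stmt11Aux.bad κ (Option.some ⁻¹' (V : Set (Option (Stmt11Aux.Z κ)))) (FF V)} =>
            (⟨((wc : Stmt11Aux.W κ), jstar), wc.2⟩ :
              Stmt11Aux.bad κ (Option.some ⁻¹' (V : Set (Option (Stmt11Aux.Z κ)))) (FF V)))
          ?_) (hFF V))
        intro a b hab
        have h2 := congrArg Subtype.val hab
        exact Subtype.ext (Prod.ext_iff.1 h2).1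
      have hmkle : #(Stmt11Aux.W κ) ≤ κ := by
        calc #(Stmt11Aux.W κ) = #(Set.univ : Set (Stmt11Aux.W κ)) := Cardinal.mk_univ.symm
          _ ≤ #(⋃ V : Us, {w : Stmt11Aux.W κ |
              ((w, jstar) : Stmt11Aux.Z κ) ∈
                Stmt11Aux.bad κ (Option.some ⁻¹' (V : Set (Option (Stmt11Aux.Z κ)))) (FF V)}) :=
            Cardinal.mk_le_mk_of_subset hsub
          _ ≤ Cardinal.sum (fun V : Us => #({w : Stmt11Aux.W κ |
              ((w, jstar) : Stmt11Aux.Z κ) ∈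
                Stmt11Aux.bad κ (Option.some ⁻¹' (V : Set (Option (Stmt11Aux.Z κ)))) (FF V)})) :=
            Cardinal.mk_iUnion_le_sum_mk
          _ ≤ Cardinal.sum (fun _ : Us => κ) := Cardinal.sum_le_sum _ _ hble
          _ = #Us * κ := Cardinal.sum_const' _ _
          _ ≤ κ * κ := by
            refine mul_le_mul' ?_ le_rfl
            exact (Cardinal.le_aleph0_iff_set_countable.2 hUsC).trans hκ0
          _ = κ := Cardinal.mul_eq_self hκ0
      rw [Stmt11Aux.mk_W] at hmkle
      exact absurd hmkle (not_le.2 (Order.lt_succ κ))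
    obtain ⟨w, hw⟩ := hwex
    have hmemint : (some ((w, jstar) : Stmt11Aux.Z κ)) ∈ ⋂₀ Us :=
      Set.mem_sInter.2 fun V hV => hw ⟨V, hV⟩
    rw [hinter] at hmemint
    exact Option.some_ne_none _ hmemint
  · -- aNum = κ
    have hmemA : κ ∈ {c : Cardinal.{u} | ∃ A : Set (Option (Stmt11Aux.Z κ)),
        (none : Option (Stmt11Aux.Z κ)) ∉ A ∧
        (none : Option (Stmt11Aux.Z κ)) ∈
          @closure _ (filterTop (Stmt11Aux.p κ hκ0)) A ∧ c = Cardinal.mk ↥A} := by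
      have hκle : κ ≤ #(Set.univ : Set (Stmt11Aux.W κ)) := by
        rw [Cardinal.mk_univ, Stmt11Aux.mk_W]
        exact (Order.lt_succ κ).le
      obtain ⟨B, -, hBmk⟩ := Cardinal.le_mk_iff_exists_subset.mp hκle
      refine ⟨Option.some '' {z : Stmt11Aux.Z κ | z.1 ∈ B}, ?_, ?_, ?_⟩
      · rintro ⟨z, -, h⟩
        exact Option.some_ne_none z h
      · rw [hmemcl]
        intro U hU hnU
        obtain ⟨F, hF⟩ := (isOpen_filterTop_iff _ _).1 hU hnU
        obtain ⟨j, hj⟩ := Infinite.exists_notMem_finset F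
        have hw : ∃ w, w ∈ B ∧ ((w, j) : Stmt11Aux.Z κ) ∈ Option.some ⁻¹' U := by
          by_contra hcon
          push_neg at hcon
          have hinj : Function.Injective (fun wb : B =>
              (⟨(((wb : Stmt11Aux.W κ), j) : Stmt11Aux.Z κ),
                hcon wb wb.2, hj⟩ :
                Stmt11Aux.bad κ (Option.some ⁻¹' U) F)) := by
            intro a b hab
            have h2 := congrArg Subtype.val hab
            exact Subtype.ext (Prod.ext_iff.1 h2).1
          have hle : #B ≤ #(Stmt11Aux.bad κ (Option.some ⁻¹' U) F) :=
            Cardinal.mk_le_of_injective hinj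
          rw [hBmk] at hle
          exact absurd (hle.trans_lt hF) (lt_irrefl κ)
        obtain ⟨w, hwB, hwU⟩ := hw
        exact ⟨some ((w, j) : Stmt11Aux.Z κ), hwU, ⟨(w, j), hwB, rfl⟩⟩
      · have h1 : #(Option.some '' {z : Stmt11Aux.Z κ | z.1 ∈ B}) =
            #({z : Stmt11Aux.Z κ | z.1 ∈ B}) :=
          Cardinal.mk_image_eq (Option.some_injective _)
        have e : {z : Stmt11Aux.Z κ | z.1 ∈ B} ≃ (B × Stmt11Aux.J.{u}) :=
          ⟨fun z => (⟨z.1.1, z.2⟩, z.1.2), fun bj => ⟨(bj.1.1, bj.2), bj.1.2⟩,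
           fun z => rfl, fun bj => rfl⟩
        have h2 : #({z : Stmt11Aux.Z κ | z.1 ∈ B}) = κ := by
          rw [Cardinal.mk_congr e, Cardinal.mk_prod, Cardinal.lift_id, Cardinal.lift_id,
            hBmk, Stmt11Aux.mk_J]
          exact Cardinal.mul_eq_left hκ0 hκ (Cardinal.aleph_pos 1).ne'
        rw [h1, h2]
    unfold aNum
    refine le_antisymm (csInf_le' hmemA) (le_csInf ⟨_, hmemA⟩ ?_)
    rintro c ⟨A, hnA, hcl, rfl⟩
    by_contra hlt
    rw [not_le] at hlt
    have hAeq : A = Option.some '' (Option.some ⁻¹' A) := by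
      ext o
      cases o with
      | none => simp [hnA]
      | some z => simp
    have hA' : #(Option.some ⁻¹' A) < κ := by
      rw [← Cardinal.mk_image_eq (s := Option.some ⁻¹' A) (Option.some_injective _), ← hAeq]
      exact hlt
    have hO : (filterTop (Stmt11Aux.p κ hκ0)).IsOpen
        (insert none (Option.some '' (Option.some ⁻¹' A)ᶜ)) := by
      rw [isOpen_filterTop_iff]
      intro _
      rw [hpre]
      exact Stmt11Aux.compl_small_mem hA'
    rw [hmemcl] at hcl
    obtain ⟨o, hoO, hoA⟩ := hcl _ hO (Set.mem_insert _ _)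
    cases o with
    | none => exact hnA hoA
    | some z =>
      rcases Set.mem_insert_iff.1 hoO with h | ⟨z', hz', hz'eq⟩
      · exact Option.some_ne_none _ h
      · have hzz : z' = z := Option.some_injective _ hz'eq
        rw [hzz] at hz'
        exact hz' hoA
  · -- no separately continuous selection
    rintro ⟨R, ⟨htot, hanti⟩, hsep⟩
    have hcol : ∀ j : Stmt11Aux.J.{u},
        κ < #({z : Stmt11Aux.Z κ | z ∈ {x : Stmt11Aux.Z κ | R (some x) none} ∧ z.2 = j}) ∨
        κ < #({z : Stmt11Aux.Z κ | z ∈ {x : Stmt11Aux.Z κ | R none (some x)} ∧ z.2 = j}) := by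
      intro j
      by_contra hcon
      push_neg at hcon
      have hsub : Stmt11Aux.col κ j ⊆
          {z : Stmt11Aux.Z κ | z ∈ {x : Stmt11Aux.Z κ | R (some x) none} ∧ z.2 = j} ∪
          {z : Stmt11Aux.Z κ | z ∈ {x : Stmt11Aux.Z κ | R none (some x)} ∧ z.2 = j} := by
        intro z hz
        rcases htot (some z) none with h | h
        · exact Or.inl ⟨h, hz⟩
        · exact Or.inr ⟨h, hz⟩
      have hle : Order.succ κ ≤ κ := by
        calc Order.succ κ = #(Stmt11Aux.col κ j) := (Stmt11Aux.mk_col j).symm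
          _ ≤ #(({z : Stmt11Aux.Z κ | z ∈ {x : Stmt11Aux.Z κ | R (some x) none} ∧ z.2 = j} ∪
              {z : Stmt11Aux.Z κ | z ∈ {x : Stmt11Aux.Z κ | R none (some x)} ∧ z.2 = j} :
                Set (Stmt11Aux.Z κ))) := Cardinal.mk_le_mk_of_subset hsub
          _ ≤ #({z : Stmt11Aux.Z κ | z ∈ {x : Stmt11Aux.Z κ | R (some x) none} ∧ z.2 = j}) +
              #({z : Stmt11Aux.Z κ | z ∈ {x : Stmt11Aux.Z κ | R none (some x)} ∧ z.2 = j}) :=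
            Cardinal.mk_union_le _ _
          _ ≤ κ + κ := add_le_add hcon.1 hcon.2
          _ = κ := Cardinal.add_eq_self hκ0
      exact absurd hle (not_le.2 (Order.lt_succ κ))
    by_cases hTL : ({j : Stmt11Aux.J.{u} |
        κ < #({z : Stmt11Aux.Z κ |
          z ∈ {x : Stmt11Aux.Z κ | R (some x) none} ∧ z.2 = j})}).Countable
    · -- then the U-side is uncountable
      have hTU : ¬ ({j : Stmt11Aux.J.{u} |
          κ < #({z : Stmt11Aux.Z κ |
            z ∈ {x : Stmt11Aux.Z κ | R none (some x)} ∧ z.2 = j})}).Countable := by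
        intro hTUc
        have huniv : (Set.univ : Set Stmt11Aux.J.{u}).Countable :=
          (hTL.union hTUc).mono fun j _ => hcol j
        rw [Cardinal.countable_iff_lt_aleph_one, Cardinal.mk_univ, Stmt11Aux.mk_J] at huniv
        exact lt_irrefl _ huniv
      refine Stmt11Aux.main_comb hκ hκ0 {x : Stmt11Aux.Z κ | R none (some x)}
        (fun y => {z : Stmt11Aux.Z κ |
          (R (some z) (some y) ∧ some z ≠ some y) ∨ ¬ R none (some y)})
        ?_ ?_ hTU
      · intro y
        show {z : Stmt11Aux.Z κ |
          (R (some z) (some y) ∧ some z ≠ some y) ∨ ¬ R none (some y)} ∈ Stmt11Aux.p κ hκ0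
        by_cases hy : R none (some y)
        · have heq : {z : Stmt11Aux.Z κ |
              (R (some z) (some y) ∧ some z ≠ some y) ∨ ¬ R none (some y)} =
              {z : Stmt11Aux.Z κ | R (some z) (some y) ∧ some z ≠ some y} := by
            ext z; simp [hy]
          rw [heq]
          exact (isOpen_filterTop_iff _ _).1 (hsep (some y)).1
            ⟨hy, fun h => by cases h⟩
        · have heq : {z : Stmt11Aux.Z κ |
              (R (some z) (some y) ∧ some z ≠ some y) ∨ ¬ R none (some y)} = Set.univ := by
            ext z; simp [hy]
          rw [heq]
          exact Filter.univ_mem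
      · intro x hx y hy hne h
        obtain ⟨h1, h2⟩ := h
        rcases h1 with ⟨h1, -⟩ | h1
        · rcases h2 with ⟨h2, -⟩ | h2
          · exact hne (Option.some_injective _ (hanti _ _ h2 h1))
          · exact h2 hy
        · exact h1 hx
    · refine Stmt11Aux.main_comb hκ hκ0 {x : Stmt11Aux.Z κ | R (some x) none}
        (fun x => {z : Stmt11Aux.Z κ |
          (R (some x) (some z) ∧ some x ≠ some z) ∨ ¬ R (some x) none})
        ?_ ?_ hTL
      · intro x
        show {z : Stmt11Aux.Z κ |
          (R (some x) (some z) ∧ some x ≠ some z) ∨ ¬ R (some x) none} ∈ Stmt11Aux.p κ hκ0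
        by_cases hx : R (some x) none
        · have heq : {z : Stmt11Aux.Z κ |
              (R (some x) (some z) ∧ some x ≠ some z) ∨ ¬ R (some x) none} =
              {z : Stmt11Aux.Z κ | R (some x) (some z) ∧ some x ≠ some z} := by
            ext z; simp [hx]
          rw [heq]
          exact (isOpen_filterTop_iff _ _).1 (hsep (some x)).2
            ⟨hx, fun h => by cases h⟩
        · have heq : {z : Stmt11Aux.Z κ |
              (R (some x) (some z) ∧ some x ≠ some z) ∨ ¬ R (some x) none} = Set.univ := by
            ext z; simp [hx]
          rw [heq]
          exact Filter.univ_mem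
      · intro x hx y hy hne h
        obtain ⟨h1, h2⟩ := h
        rcases h1 with ⟨h1, -⟩ | h1
        · rcases h2 with ⟨h2, -⟩ | h2
          · exact hne (Option.some_injective _ (hanti _ _ h1 h2))
          · exact h2 hy
        · exact h1 hx
end

section
/- If X_p and Y_q are filter spaces such that a(X_p) = ‖p‖ = a(Y_q) = ‖q‖, then the product space X_p × Y_q is weakly orderable by a linear order in which (p, q) is the maximum element. -/
open Set

universe u v w y

/-! ### Auxiliary machinery for `stmt16` -/

namespace Stmt16Aux

open Cardinal

/-! #### Basic facts about filter spaces and `fNorm` -/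

lemma exists_min_mem {X : Type u} (p : Filter X) : ∃ P ∈ p, Cardinal.mk ↥P = fNorm p := by
  have hne : {c : Cardinal.{u} | ∃ P ∈ p, c = Cardinal.mk ↥P}.Nonempty :=
    ⟨Cardinal.mk ↥(univ : Set X), univ, Filter.univ_mem, rfl⟩
  obtain ⟨P, hP, hPc⟩ := csInf_mem hne
  exact ⟨P, hP, hPc.symm⟩

lemma fNorm_infinite {X : Type u} {p : Filter X} (hp : IsFree p) : Cardinal.aleph0 ≤ fNorm p := by
  by_contra h
  push_neg at h
  obtain ⟨P, hPp, hPc⟩ := exists_min_mem p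
  have hPfin : P.Finite := by
    rw [← Cardinal.lt_aleph0_iff_set_finite]
    rw [hPc]; exact h
  have hQ : ∀ x : X, ∃ Q ∈ p, x ∉ Q := by
    intro x
    by_contra hx
    push_neg at hx
    have : x ∈ ⋂₀ {P : Set X | P ∈ p} := fun Q hQ => hx Q hQ
    rw [hp.2] at this
    exact this
  choose Q hQp hQx using hQ
  have hmem : P ∩ ⋂ x ∈ P, Q x ∈ p :=
    Filter.inter_mem hPp ((Filter.biInter_mem hPfin).mpr (fun x _ => hQp x))
  have hempty : P ∩ ⋂ x ∈ P, Q x = ∅ := by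
    ext x
    simp only [mem_inter_iff, mem_iInter, mem_empty_iff_false, iff_false, not_and]
    intro hxP hall
    exact hQx x (hall x hxP)
  rw [hempty] at hmem
  exact hp.1 hmem

lemma key_avoid {X : Type u} {p : Filter X}
    (e1 : aNum (filterTop p) (none : Option X) = fNorm p)
    (A : Set X) (hA : Cardinal.mk ↥A < fNorm p) : ∃ P ∈ p, ∀ x ∈ P, x ∉ A := by
  by_contra h
  push_neg at h
  have hcl : (none : Option X) ∈ @closure _ (filterTop p) (Option.some '' A) := by
    letI := filterTop p
    rw [mem_closure_iff]
    intro o ho hno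
    have hop : Option.some ⁻¹' o ∈ p := ho hno
    obtain ⟨x, hx, hxA⟩ := h _ hop
    exact ⟨some x, hx, mem_image_of_mem _ hxA⟩
  have hmem : Cardinal.mk ↥(Option.some '' A) ∈
      {c : Cardinal.{u} | ∃ B : Set (Option X), none ∉ B ∧
        none ∈ @closure _ (filterTop p) B ∧ c = Cardinal.mk ↥B} :=
    ⟨Option.some '' A, by simp, hcl, rfl⟩
  have h1 : aNum (filterTop p) (none : Option X) ≤ Cardinal.mk ↥(Option.some '' A) :=
    csInf_le' hmem
  rw [Cardinal.mk_image_eq (Option.some_injective X)] at h1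
  rw [e1] at h1
  exact absurd hA (not_lt.mpr h1)

lemma exists_F {X : Type u} {ι : Type u} [LinearOrder ι] {p : Filter X}
    (e1 : aNum (filterTop p) (none : Option X) = fNorm p)
    (e : ι ↪ X) (hrange : Set.range e ∈ p)
    (hIic : ∀ i : ι, Cardinal.mk ↥(Set.Iic i) < fNorm p) :
    ∃ F : Option X → WithTop (WithBot ι),
      F none = ⊤ ∧ (∀ x : X, F (some x) ≠ ⊤) ∧
      (∀ v : WithTop (WithBot ι), v < ⊤ → {x : X | v < F (some x)} ∈ p) := by
  classical
  refine ⟨fun u => match u with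
    | none => ⊤
    | some x => if h : ∃ j, e j = x then ((h.choose : WithBot ι) : WithTop (WithBot ι))
        else ((⊥ : WithBot ι) : WithTop (WithBot ι)), rfl, ?_, ?_⟩
  · intro x
    dsimp only
    split <;> exact WithTop.coe_ne_top
  · intro v hv
    lift v to WithBot ι using hv.ne
    induction v with
    | bot =>
      refine Filter.mem_of_superset hrange ?_
      rintro x ⟨j, rfl⟩
      have h : ∃ j', e j' = e j := ⟨j, rfl⟩
      simp only [mem_setOf_eq, dif_pos h]
      exact WithTop.coe_lt_coe.mpr (by simp)
    | coe i =>
      obtain ⟨P, hPp, hPA⟩ := key_avoid e1 (e '' Set.Iic i)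
        (lt_of_le_of_lt (Cardinal.mk_image_le) (hIic i))
      refine Filter.mem_of_superset (Filter.inter_mem hrange hPp) ?_
      rintro x ⟨⟨j, rfl⟩, hxP⟩
      have h : ∃ j', e j' = e j := ⟨j, rfl⟩
      simp only [mem_setOf_eq, dif_pos h]
      refine WithTop.coe_lt_coe.mpr (WithBot.coe_lt_coe.mpr ?_)
      by_contra hle
      push_neg at hle
      exact hPA _ hxP ⟨h.choose, hle, h.choose_spec⟩

/-! #### The key (lexicographic) map -/

section KeySection
variable {X Y : Type u} {ι : Type u} [LinearOrder ι]

/-- Target type of the key map. -/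
abbrev KT (ι X Y : Type u) :=
  Lex ((WithTop (WithBot ι)) × Lex (Fin 2 × Lex (Cardinal.{u} × Lex (Fin 2 ×
    Lex ((WithTop (WithBot ι))ᵒᵈ × Cardinal.{u})))))

def k1 (F : Option X → WithTop (WithBot ι)) (G : Option Y → WithTop (WithBot ι))
    (z : Option X × Option Y) : WithTop (WithBot ι) := min (F z.1) (G z.2)

noncomputable def k2 (F : Option X → WithTop (WithBot ι)) (G : Option Y → WithTop (WithBot ι))
    (z : Option X × Option Y) : Fin 2 := if F z.1 < G z.2 then 0 else 1

noncomputable def k3 (F : Option X → WithTop (WithBot ι)) (G : Option Y → WithTop (WithBot ι))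
    (z : Option X × Option Y) : Cardinal.{u} :=
  if F z.1 < G z.2 then embeddingToCardinal (z.1, (none : Option Y))
  else embeddingToCardinal ((none : Option X), z.2)

def k4f (z : Option X × Option Y) : Fin 2 :=
  match z with
  | (none, _) => 0
  | (_, none) => 0
  | (some _, some _) => 1

noncomputable def k5 (F : Option X → WithTop (WithBot ι)) (G : Option Y → WithTop (WithBot ι))
    (z : Option X × Option Y) : WithTop (WithBot ι) :=
  if F z.1 < G z.2 then G z.2 else F z.1

noncomputable def kfun (F : Option X → WithTop (WithBot ι)) (G : Option Y → WithTop (WithBot ι))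
    (z : Option X × Option Y) : KT ι X Y :=
  toLex (k1 F G z, toLex (k2 F G z, toLex (k3 F G z, toLex (k4f z,
    toLex (OrderDual.toDual (k5 F G z), embeddingToCardinal z)))))

lemma kfun_inj (F : Option X → WithTop (WithBot ι)) (G : Option Y → WithTop (WithBot ι)) :
    Function.Injective (kfun F G) := by
  intro z w h
  have := congrArg (fun t => (ofLex ((ofLex ((ofLex ((ofLex ((ofLex t).2)).2)).2)).2)).2) h
  exact embeddingToCardinal.injective this

lemma kfun_lt_iff (F : Option X → WithTop (WithBot ι)) (G : Option Y → WithTop (WithBot ι))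
    (z w : Option X × Option Y) :
    kfun F G z < kfun F G w ↔
      k1 F G z < k1 F G w ∨ (k1 F G z = k1 F G w ∧
        (k2 F G z < k2 F G w ∨ (k2 F G z = k2 F G w ∧
          (k3 F G z < k3 F G w ∨ (k3 F G z = k3 F G w ∧
            (k4f z < k4f w ∨ (k4f z = k4f w ∧
              (k5 F G w < k5 F G z ∨ (k5 F G z = k5 F G w ∧
                embeddingToCardinal z < embeddingToCardinal w))))))))) := by
  simp only [kfun, Prod.Lex.lt_iff, ofLex_toLex, OrderDual.toDual_lt_toDual, OrderDual.toDual_inj]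

variable {p : Filter X} {q : Filter Y}
variable {F : Option X → WithTop (WithBot ι)} {G : Option Y → WithTop (WithBot ι)}

lemma kcolm1 (hFnone : F none = ⊤) (y : Y) : k1 F G ((none : Option X), some y) = G (some y) := by
  simp [k1, hFnone]
lemma kcolm2 (hFnone : F none = ⊤) (y : Y) : k2 F G ((none : Option X), some y) = 1 := by
  simp [k2, hFnone]
lemma kcolm3 (hFnone : F none = ⊤) (y : Y) : k3 F G ((none : Option X), some y)
    = embeddingToCardinal ((none : Option X), (some y : Option Y)) := by
  simp [k3, hFnone]

lemma kcol1 {x : X} {y : Y} (h : G (some y) ≤ F (some x)) :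
    k1 F G (some x, some y) = G (some y) := by
  simp [k1, min_eq_right h]
lemma kcol2 {x : X} {y : Y} (h : G (some y) ≤ F (some x)) :
    k2 F G (some x, some y) = 1 := by
  simp [k2, not_lt.mpr h]
lemma kcol3 {x : X} {y : Y} (h : G (some y) ≤ F (some x)) :
    k3 F G (some x, some y) = embeddingToCardinal ((none : Option X), (some y : Option Y)) := by
  simp [k3, not_lt.mpr h]
lemma kcol5 {x : X} {y : Y} (h : G (some y) ≤ F (some x)) :
    k5 F G (some x, some y) = F (some x) := by
  simp [k5, not_lt.mpr h]

lemma krowm1 (hGnone : G none = ⊤) (x : X) : k1 F G (some x, (none : Option Y)) = F (some x) := by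
  simp [k1, hGnone]
lemma krowm2 {x : X} (hGnone : G none = ⊤) (hf : F (some x) < ⊤) :
    k2 F G (some x, (none : Option Y)) = 0 := by
  simp [k2, hGnone, hf]
lemma krowm3 {x : X} (hGnone : G none = ⊤) (hf : F (some x) < ⊤) :
    k3 F G (some x, (none : Option Y))
    = embeddingToCardinal ((some x : Option X), (none : Option Y)) := by
  simp [k3, hGnone, hf]

lemma krow1 {x : X} {y : Y} (h : F (some x) < G (some y)) :
    k1 F G (some x, some y) = F (some x) := by
  simp [k1, min_eq_left h.le]
lemma krow2 {x : X} {y : Y} (h : F (some x) < G (some y)) :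
    k2 F G (some x, some y) = 0 := by
  simp [k2, h]
lemma krow3 {x : X} {y : Y} (h : F (some x) < G (some y)) :
    k3 F G (some x, some y) = embeddingToCardinal ((some x : Option X), (none : Option Y)) := by
  simp [k3, h]
lemma krow5 {x : X} {y : Y} (h : F (some x) < G (some y)) :
    k5 F G (some x, some y) = G (some y) := by
  simp [k5, h]

/-- Core lemma (Lp>) : if `a < (none, some y)` then p-many column points lie above `a`. -/
lemma Lp_gt (hFnone : F none = ⊤)
    (hFbig : ∀ v : WithTop (WithBot ι), v < ⊤ → {x : X | v < F (some x)} ∈ p)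
    (a : Option X × Option Y) (y : Y) (hgt : G (some y) < ⊤)
    (ha : kfun F G a < kfun F G (none, some y)) :
    ∃ P ∈ p, ∀ x ∈ P, kfun F G a < kfun F G (some x, some y) := by
  have ha' := ha
  rw [kfun_lt_iff] at ha
  rcases ha with h1 | ⟨h1, h2⟩
  · rw [kcolm1 hFnone] at h1
    refine ⟨{x | k1 F G a < F (some x)}, hFbig _ (h1.trans hgt), fun x hx => ?_⟩
    rw [kfun_lt_iff]
    exact Or.inl (lt_min hx h1)
  · rw [kcolm1 hFnone] at h1
    have hPmem : {x : X | G (some y) ≤ F (some x)} ∈ p :=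
      Filter.mem_of_superset (hFbig _ hgt) (fun x hx => le_of_lt (mem_setOf_eq ▸ hx))
    rcases h2 with h2 | ⟨h2, h3⟩
    · refine ⟨_, hPmem, fun x hx => ?_⟩
      rw [kfun_lt_iff]
      refine Or.inr ⟨by rw [kcol1 hx, h1], Or.inl ?_⟩
      rw [kcol2 hx]
      rw [kcolm2 hFnone] at h2
      exact h2
    · rcases h3 with h3 | ⟨h3, h4⟩
      · refine ⟨_, hPmem, fun x hx => ?_⟩
        rw [kfun_lt_iff]
        refine Or.inr ⟨by rw [kcol1 hx, h1], Or.inr ⟨?_, Or.inl ?_⟩⟩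
        · rw [kcol2 hx, h2, kcolm2 hFnone]
        · rw [kcol3 hx]
          rw [kcolm3 hFnone] at h3
          exact h3
      · exfalso
        obtain ⟨a1, a2⟩ := a
        rw [kcolm2 hFnone] at h2
        have hcond : ¬ (F a1 < G a2) := by
          intro hc
          simp only [k2, hc, if_pos] at h2
          exact absurd h2 (by decide)
        have h3' : k3 F G (a1, a2)
            = embeddingToCardinal ((none : Option X), (some y : Option Y)) := by
          rw [h3, kcolm3 hFnone]
        rw [k3, if_neg hcond] at h3'
        have ha2 : a2 = some y := (Prod.ext_iff.mp (embeddingToCardinal.injective h3')).2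
        rcases h4 with h4 | ⟨h4, _⟩
        · exact absurd h4 (by simp [k4f])
        · have ha1 : a1 = none := by
            cases a1 with
            | none => rfl
            | some x' =>
              rw [ha2] at h4
              exact absurd h4 (by simp [k4f])
          rw [ha1, ha2] at ha'
          exact lt_irrefl _ ha'

/-- Core lemma (Lp<) : if `(none, some y) < a` then p-many column points lie below `a`. -/
lemma Lp_lt (hFnone : F none = ⊤) (hFtop : ∀ x : X, F (some x) ≠ ⊤)
    (hFbig : ∀ v : WithTop (WithBot ι), v < ⊤ → {x : X | v < F (some x)} ∈ p)
    (a : Option X × Option Y) (y : Y)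
    (ha : kfun F G (none, some y) < kfun F G a) :
    ∃ P ∈ p, ∀ x ∈ P, kfun F G (some x, some y) < kfun F G a := by
  have ha' := ha
  rw [kfun_lt_iff] at ha
  obtain ⟨a1, a2⟩ := a
  rcases ha with h1 | ⟨h1, h2⟩
  · rw [kcolm1 hFnone] at h1
    refine ⟨univ, Filter.univ_mem, fun x _ => ?_⟩
    rw [kfun_lt_iff]
    exact Or.inl (lt_of_le_of_lt (min_le_right _ _) h1)
  · rw [kcolm1 hFnone] at h1
    rcases h2 with h2 | ⟨h2, h3⟩
    · exfalso
      rw [kcolm2 hFnone] at h2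
      have : k2 F G (a1, a2) ≤ 1 := by unfold k2; split <;> decide
      exact absurd h2 (not_lt.mpr this)
    · rw [kcolm2 hFnone] at h2
      have hcond : ¬ (F a1 < G a2) := by
        intro hc
        simp only [k2, hc, if_pos] at h2
        exact absurd h2.symm (by decide)
      rcases h3 with h3 | ⟨h3, h4⟩
      · rw [kcolm3 hFnone] at h3
        refine ⟨univ, Filter.univ_mem, fun x _ => ?_⟩
        rw [kfun_lt_iff]
        by_cases hc : F (some x) < G (some y)
        · exact Or.inl (by rw [krow1 hc, ← h1]; exact hc)
        · push_neg at hc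
          refine Or.inr ⟨by rw [kcol1 hc, h1], Or.inr ⟨?_, Or.inl ?_⟩⟩
          · rw [kcol2 hc, ← h2]
          · rw [kcol3 hc]; exact h3
      · rw [kcolm3 hFnone] at h3
        have h3' : k3 F G (a1, a2)
            = embeddingToCardinal ((none : Option X), (some y : Option Y)) := by
          rw [← h3]
        rw [k3, if_neg hcond] at h3'
        have ha2 : a2 = some y := (Prod.ext_iff.mp (embeddingToCardinal.injective h3')).2
        subst ha2
        rcases h4 with h4 | ⟨h4, _⟩
        · have ha1 : ∃ x', a1 = some x' := by
            cases a1 with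
            | none => exact absurd h4 (by simp [k4f])
            | some x' => exact ⟨x', rfl⟩
          obtain ⟨x', rfl⟩ := ha1
          have hge : G (some y) ≤ F (some x') := not_lt.mp hcond
          refine ⟨{x | F (some x') < F (some x)}, hFbig _ (lt_top_iff_ne_top.mpr (hFtop x')),
            fun x hx => ?_⟩
          have hge2 : G (some y) ≤ F (some x) := le_trans hge (le_of_lt hx)
          rw [kfun_lt_iff]
          refine Or.inr ⟨by rw [kcol1 hge2, h1], Or.inr ⟨by rw [kcol2 hge2, ← h2],
            Or.inr ⟨by rw [kcol3 hge2]; exact h3, Or.inr ⟨rfl, Or.inl ?_⟩⟩⟩⟩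
          rw [kcol5 hge2, kcol5 hge]
          exact hx
        · exfalso
          have ha1 : a1 = none := by
            cases a1 with
            | none => rfl
            | some x' => exact absurd h4.symm (by simp [k4f])
          rw [ha1] at ha'
          exact lt_irrefl _ ha'

/-- Core lemma (Lq>) : if `a < (some x, none)` then q-many row points lie above `a`. -/
lemma Lq_gt (hGnone : G none = ⊤)
    (hGbig : ∀ v : WithTop (WithBot ι), v < ⊤ → {y : Y | v < G (some y)} ∈ q)
    (a : Option X × Option Y) (x : X) (hft : F (some x) < ⊤)
    (ha : kfun F G a < kfun F G (some x, none)) :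
    ∃ Q ∈ q, ∀ y ∈ Q, kfun F G a < kfun F G (some x, some y) := by
  have ha' := ha
  rw [kfun_lt_iff] at ha
  rcases ha with h1 | ⟨h1, h2⟩
  · rw [krowm1 hGnone] at h1
    refine ⟨{y | k1 F G a < G (some y)}, hGbig _ (h1.trans hft), fun y hy => ?_⟩
    rw [kfun_lt_iff]
    exact Or.inl (lt_min h1 hy)
  · rw [krowm1 hGnone] at h1
    have hQmem : {y : Y | F (some x) < G (some y)} ∈ q := hGbig _ hft
    rcases h2 with h2 | ⟨h2, h3⟩
    · exfalso
      rw [krowm2 hGnone hft] at h2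
      exact absurd h2 (by simp)
    · rw [krowm2 hGnone hft] at h2
      rcases h3 with h3 | ⟨h3, h4⟩
      · refine ⟨_, hQmem, fun y hy => ?_⟩
        rw [kfun_lt_iff]
        refine Or.inr ⟨by rw [krow1 hy, h1], Or.inr ⟨by rw [krow2 hy, h2], Or.inl ?_⟩⟩
        rw [krow3 hy]
        rw [krowm3 hGnone hft] at h3
        exact h3
      · exfalso
        obtain ⟨a1, a2⟩ := a
        have hcond : F a1 < G a2 := by
          by_contra hc
          simp only [k2, if_neg hc] at h2
          exact absurd h2 (by decide)
        have h3' : k3 F G (a1, a2)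
            = embeddingToCardinal ((some x : Option X), (none : Option Y)) := by
          rw [h3, krowm3 hGnone hft]
        rw [k3, if_pos hcond] at h3'
        have ha1 : a1 = some x := (Prod.ext_iff.mp (embeddingToCardinal.injective h3')).1
        rcases h4 with h4 | ⟨h4, _⟩
        · exact absurd h4 (by simp [k4f])
        · have ha2 : a2 = none := by
            cases a2 with
            | none => rfl
            | some y' =>
              rw [ha1] at h4
              exact absurd h4 (by simp [k4f])
          rw [ha1, ha2] at ha'
          exact lt_irrefl _ ha'

/-- Core lemma (Lq<) : if `(some x, none) < a` then q-many row points lie below `a`. -/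
lemma Lq_lt (hGnone : G none = ⊤) (hGtop : ∀ y : Y, G (some y) ≠ ⊤)
    (hGbig : ∀ v : WithTop (WithBot ι), v < ⊤ → {y : Y | v < G (some y)} ∈ q)
    (a : Option X × Option Y) (x : X) (hft : F (some x) < ⊤)
    (ha : kfun F G (some x, none) < kfun F G a) :
    ∃ Q ∈ q, ∀ y ∈ Q, kfun F G (some x, some y) < kfun F G a := by
  have ha' := ha
  rw [kfun_lt_iff] at ha
  obtain ⟨a1, a2⟩ := a
  have hQmem : {y : Y | F (some x) < G (some y)} ∈ q := hGbig _ hft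
  rcases ha with h1 | ⟨h1, h2⟩
  · rw [krowm1 hGnone] at h1
    refine ⟨univ, Filter.univ_mem, fun y _ => ?_⟩
    rw [kfun_lt_iff]
    exact Or.inl (lt_of_le_of_lt (min_le_left _ _) h1)
  · rw [krowm1 hGnone] at h1
    rcases h2 with h2 | ⟨h2, h3⟩
    · rw [krowm2 hGnone hft] at h2
      refine ⟨_, hQmem, fun y hy => ?_⟩
      rw [kfun_lt_iff]
      exact Or.inr ⟨by rw [krow1 hy, h1], Or.inl (by rw [krow2 hy]; exact h2)⟩
    · rw [krowm2 hGnone hft] at h2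
      have hcond : F a1 < G a2 := by
        by_contra hc
        simp only [k2, if_neg hc] at h2
        exact absurd h2.symm (by decide)
      rcases h3 with h3 | ⟨h3, h4⟩
      · rw [krowm3 hGnone hft] at h3
        refine ⟨_, hQmem, fun y hy => ?_⟩
        rw [kfun_lt_iff]
        refine Or.inr ⟨by rw [krow1 hy, h1], Or.inr ⟨by rw [krow2 hy, ← h2], Or.inl ?_⟩⟩
        rw [krow3 hy]
        exact h3
      · rw [krowm3 hGnone hft] at h3
        have h3' : k3 F G (a1, a2)
            = embeddingToCardinal ((some x : Option X), (none : Option Y)) := by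
          rw [← h3]
        rw [k3, if_pos hcond] at h3'
        have ha1 : a1 = some x := (Prod.ext_iff.mp (embeddingToCardinal.injective h3')).1
        subst ha1
        rcases h4 with h4 | ⟨h4, _⟩
        · have ha2 : ∃ y', a2 = some y' := by
            cases a2 with
            | none => exact absurd h4 (by simp [k4f])
            | some y' => exact ⟨y', rfl⟩
          obtain ⟨y', rfl⟩ := ha2
          refine ⟨{y | G (some y') < G (some y)}, hGbig _ (lt_top_iff_ne_top.mpr (hGtop y')),
            fun y hy => ?_⟩
          have hgt2 : F (some x) < G (some y) := lt_trans hcond hy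
          rw [kfun_lt_iff]
          refine Or.inr ⟨by rw [krow1 hgt2, h1], Or.inr ⟨by rw [krow2 hgt2, ← h2],
            Or.inr ⟨by rw [krow3 hgt2]; exact h3, Or.inr ⟨rfl, Or.inl ?_⟩⟩⟩⟩
          rw [krow5 hgt2, krow5 hcond]
          exact hy
        · exfalso
          have ha2 : a2 = none := by
            cases a2 with
            | none => rfl
            | some y' => exact absurd h4.symm (by simp [k4f])
          rw [ha2] at ha'
          exact lt_irrefl _ ha'

/-- Core lemma (Ltop) : anything strictly below `(none, none)` has a whole box above it. -/
lemma Ltop (hFnone : F none = ⊤) (hFtop : ∀ x : X, F (some x) ≠ ⊤)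
    (hFbig : ∀ v : WithTop (WithBot ι), v < ⊤ → {x : X | v < F (some x)} ∈ p)
    (hGnone : G none = ⊤) (hGtop : ∀ y : Y, G (some y) ≠ ⊤)
    (hGbig : ∀ v : WithTop (WithBot ι), v < ⊤ → {y : Y | v < G (some y)} ∈ q)
    (a : Option X × Option Y)
    (ha : kfun F G a < kfun F G (none, none)) :
    ∃ P ∈ p, ∃ Q ∈ q, ∀ u ∈ insert none (Option.some '' P),
      ∀ v ∈ insert none (Option.some '' Q), kfun F G a < kfun F G (u, v) := by
  have h1a : k1 F G a < ⊤ := by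
    rcases lt_or_eq_of_le (le_top : k1 F G a ≤ ⊤) with h | h
    · exact h
    · exfalso
      obtain ⟨a1, a2⟩ := a
      have hF1 : F a1 = ⊤ := top_le_iff.mp (by rw [← h]; exact min_le_left _ _)
      have hG2 : G a2 = ⊤ := top_le_iff.mp (by rw [← h]; exact min_le_right _ _)
      have ha1 : a1 = none := by
        cases a1 with
        | none => rfl
        | some x => exact absurd hF1 (hFtop x)
      have ha2 : a2 = none := by
        cases a2 with
        | none => rfl
        | some y => exact absurd hG2 (hGtop y)
      rw [ha1, ha2] at ha
      exact lt_irrefl _ ha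
  refine ⟨{x | k1 F G a < F (some x)}, hFbig _ h1a, {y | k1 F G a < G (some y)}, hGbig _ h1a,
    fun u hu v hv => ?_⟩
  rw [kfun_lt_iff]
  refine Or.inl (lt_min ?_ ?_)
  · rcases hu with rfl | ⟨x, hx, rfl⟩
    · rw [hFnone]; exact h1a
    · exact hx
  · rcases hv with rfl | ⟨y, hy, rfl⟩
    · rw [hGnone]; exact h1a
    · exact hy

/-- Every point is at most `(none, none)` in the key order. -/
lemma kfun_le_top (hFnone : F none = ⊤) (hFtop : ∀ x : X, F (some x) ≠ ⊤)
    (hGnone : G none = ⊤) (hGtop : ∀ y : Y, G (some y) ≠ ⊤)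
    (z : Option X × Option Y) :
    kfun F G z ≤ kfun F G ((none : Option X), (none : Option Y)) := by
  rcases eq_or_ne z (none, none) with rfl | hz
  · exact le_refl _
  · refine le_of_lt ?_
    rw [kfun_lt_iff]
    refine Or.inl ?_
    have htop : k1 F G ((none : Option X), (none : Option Y)) = ⊤ := by
      simp [k1, hFnone, hGnone]
    rw [htop]
    obtain ⟨z1, z2⟩ := z
    simp only [k1]
    cases z1 with
    | some x => exact lt_of_le_of_lt (min_le_left _ _) (lt_top_iff_ne_top.mpr (hFtop x))
    | none =>
      cases z2 with
      | none => exact absurd rfl hz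
      | some y => exact lt_of_le_of_lt (min_le_right _ _) (lt_top_iff_ne_top.mpr (hGtop y))

end KeySection

/-! #### Openness of rays in the product of filter topologies -/

lemma singleton_isOpen {X : Type u} (p : Filter X) (x : X) :
    (filterTop p).IsOpen {some x} :=
  fun h => absurd h (by simp)

lemma insert_isOpen {X : Type u} (p : Filter X) {P : Set X} (hP : P ∈ p) :
    (filterTop p).IsOpen (insert none (Option.some '' P)) := by
  intro _
  refine Filter.mem_of_superset hP ?_
  intro x hx
  exact Set.mem_insert_iff.mpr (Or.inr ⟨x, hx, rfl⟩)


section Rays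
variable {X Y : Type u} {ι : Type u} [LinearOrder ι]
variable {p : Filter X} {q : Filter Y}
variable {F : Option X → WithTop (WithBot ι)} {G : Option Y → WithTop (WithBot ι)}
variable (hFnone : F none = ⊤) (hFtop : ∀ x : X, F (some x) ≠ ⊤)
  (hFbig : ∀ v : WithTop (WithBot ι), v < ⊤ → {x : X | v < F (some x)} ∈ p)
  (hGnone : G none = ⊤) (hGtop : ∀ y : Y, G (some y) ≠ ⊤)
  (hGbig : ∀ v : WithTop (WithBot ι), v < ⊤ → {y : Y | v < G (some y)} ∈ q)
include hFnone hFtop hFbig hGnone hGtop hGbig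

lemma upper_ray_open (a : Option X × Option Y) :
    (prodTop (filterTop p) (filterTop q)).IsOpen {z | kfun F G a < kfun F G z} := by
  letI := filterTop p
  letI := filterTop q
  show IsOpen {z | kfun F G a < kfun F G z}
  rw [isOpen_prod_iff]
  intro u v huv
  cases u with
  | some x =>
    cases v with
    | some y =>
      refine ⟨{some x}, {some y}, singleton_isOpen p x, singleton_isOpen q y, rfl, rfl, ?_⟩
      rintro ⟨u', v'⟩ ⟨hu', hv'⟩
      rw [mem_singleton_iff] at hu' hv'
      subst hu'; subst hv'
      exact huv
    | none =>
      obtain ⟨Q, hQ, hQy⟩ := Lq_gt hGnone hGbig a x (lt_top_iff_ne_top.mpr (hFtop x)) huv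
      refine ⟨{some x}, insert none (Option.some '' Q), singleton_isOpen p x,
        insert_isOpen q hQ, rfl, mem_insert _ _, ?_⟩
      rintro ⟨u', v'⟩ ⟨hu', hv'⟩
      rw [mem_singleton_iff] at hu'
      subst hu'
      rcases mem_insert_iff.mp hv' with rfl | ⟨y, hy, rfl⟩
      · exact huv
      · exact hQy y hy
  | none =>
    cases v with
    | some y =>
      obtain ⟨P, hP, hPx⟩ := Lp_gt hFnone hFbig a y (lt_top_iff_ne_top.mpr (hGtop y)) huv
      refine ⟨insert none (Option.some '' P), {some y}, insert_isOpen p hP,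
        singleton_isOpen q y, mem_insert _ _, rfl, ?_⟩
      rintro ⟨u', v'⟩ ⟨hu', hv'⟩
      rw [mem_singleton_iff] at hv'
      subst hv'
      rcases mem_insert_iff.mp hu' with rfl | ⟨x, hx, rfl⟩
      · exact huv
      · exact hPx x hx
    | none =>
      obtain ⟨P, hP, Q, hQ, hbox⟩ := Ltop hFnone hFtop hFbig hGnone hGtop hGbig a huv
      refine ⟨insert none (Option.some '' P), insert none (Option.some '' Q),
        insert_isOpen p hP, insert_isOpen q hQ, mem_insert _ _, mem_insert _ _, ?_⟩
      rintro ⟨u', v'⟩ ⟨hu', hv'⟩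
      exact hbox u' hu' v' hv'

lemma lower_ray_open (a : Option X × Option Y) :
    (prodTop (filterTop p) (filterTop q)).IsOpen {z | kfun F G z < kfun F G a} := by
  letI := filterTop p
  letI := filterTop q
  show IsOpen {z | kfun F G z < kfun F G a}
  rw [isOpen_prod_iff]
  intro u v huv
  cases u with
  | some x =>
    cases v with
    | some y =>
      refine ⟨{some x}, {some y}, singleton_isOpen p x, singleton_isOpen q y, rfl, rfl, ?_⟩
      rintro ⟨u', v'⟩ ⟨hu', hv'⟩
      rw [mem_singleton_iff] at hu' hv'
      subst hu'; subst hv'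
      exact huv
    | none =>
      obtain ⟨Q, hQ, hQy⟩ := Lq_lt hGnone hGtop hGbig a x (lt_top_iff_ne_top.mpr (hFtop x)) huv
      refine ⟨{some x}, insert none (Option.some '' Q), singleton_isOpen p x,
        insert_isOpen q hQ, rfl, mem_insert _ _, ?_⟩
      rintro ⟨u', v'⟩ ⟨hu', hv'⟩
      rw [mem_singleton_iff] at hu'
      subst hu'
      rcases mem_insert_iff.mp hv' with rfl | ⟨y, hy, rfl⟩
      · exact huv
      · exact hQy y hy
  | none =>
    cases v with
    | some y =>
      obtain ⟨P, hP, hPx⟩ := Lp_lt hFnone hFtop hFbig a y huv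
      refine ⟨insert none (Option.some '' P), {some y}, insert_isOpen p hP,
        singleton_isOpen q y, mem_insert _ _, rfl, ?_⟩
      rintro ⟨u', v'⟩ ⟨hu', hv'⟩
      rw [mem_singleton_iff] at hv'
      subst hv'
      rcases mem_insert_iff.mp hu' with rfl | ⟨x, hx, rfl⟩
      · exact huv
      · exact hPx x hx
    | none =>
      exact absurd huv (not_lt.mpr (kfun_le_top hFnone hFtop hGnone hGtop a))

end Rays

end Stmt16Aux

/-- If `X_p` and `Y_q` are filter spaces with `a(X_p) = ‖p‖ = a(Y_q) = ‖q‖`,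
then `X_p × Y_q` is weakly orderable by a linear order with `(p, q)` the maximum. -/
theorem stmt16 {X : Type u} {Y : Type u} [Infinite X] [Infinite Y]
    (p : Filter X) (q : Filter Y) (hp : IsFree p) (hq : IsFree q)
    (e1 : aNum (filterTop p) (none : Option X) = fNorm p)
    (e2 : fNorm p = aNum (filterTop q) (none : Option Y))
    (e3 : aNum (filterTop q) (none : Option Y) = fNorm q) :
    ∃ r : LinearOrder (Option X × Option Y),
      WOBy (prodTop (filterTop p) (filterTop q)) r ∧
      ∀ z : Option X × Option Y, r.le z (none, none) := by
  classical
  have hκq : fNorm q = fNorm p := by rw [← e3, ← e2]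
  have hκinf : Cardinal.aleph0 ≤ fNorm p := Stmt16Aux.fNorm_infinite hp
  let ι : Type u := (Cardinal.ord (fNorm p)).ToType
  have hmkι : Cardinal.mk ι = fNorm p := Cardinal.mk_ord_toType _
  have hIic : ∀ i : ι, Cardinal.mk ↥(Set.Iic i) < fNorm p := by
    intro i
    have h1 : Cardinal.mk ↥(Set.Iio i) < fNorm p := Cardinal.mk_Iio_ord_toType i
    have h2 : Cardinal.mk ↥(Set.Iic i) ≤ Cardinal.mk ↥(Set.Iio i) + 1 := by
      rw [← Set.Iio_union_right]
      refine le_trans (Cardinal.mk_union_le _ _) ?_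
      simp
    exact lt_of_le_of_lt h2
      (Cardinal.add_lt_of_lt hκinf h1 (lt_of_lt_of_le Cardinal.one_lt_aleph0 hκinf))
  obtain ⟨P0, hP0, hP0c⟩ := Stmt16Aux.exists_min_mem p
  obtain ⟨eP⟩ : Nonempty (ι ≃ ↥P0) := Cardinal.eq.mp (by rw [hmkι, hP0c])
  let e : ι ↪ X := ⟨fun i => ((eP i : ↥P0) : X), fun i j h => eP.injective (Subtype.ext h)⟩
  have hrange : Set.range e ∈ p := by
    have he : Set.range e = P0 := by
      ext x
      constructor
      · rintro ⟨i, rfl⟩; exact (eP i).2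
      · intro hx; exact ⟨eP.symm ⟨x, hx⟩, congrArg Subtype.val (eP.apply_symm_apply ⟨x, hx⟩)⟩
    rw [he]; exact hP0
  obtain ⟨F, hFnone, hFtop, hFbig⟩ := Stmt16Aux.exists_F e1 e hrange hIic
  obtain ⟨Q0, hQ0, hQ0c⟩ := Stmt16Aux.exists_min_mem q
  obtain ⟨eQ⟩ : Nonempty (ι ≃ ↥Q0) := Cardinal.eq.mp (by rw [hmkι, hQ0c, hκq])
  let e' : ι ↪ Y := ⟨fun i => ((eQ i : ↥Q0) : Y), fun i j h => eQ.injective (Subtype.ext h)⟩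
  have hrange' : Set.range e' ∈ q := by
    have he' : Set.range e' = Q0 := by
      ext y
      constructor
      · rintro ⟨i, rfl⟩; exact (eQ i).2
      · intro hy; exact ⟨eQ.symm ⟨y, hy⟩, congrArg Subtype.val (eQ.apply_symm_apply ⟨y, hy⟩)⟩
    rw [he']; exact hQ0
  have hIic' : ∀ i : ι, Cardinal.mk ↥(Set.Iic i) < fNorm q := by
    intro i; rw [hκq]; exact hIic i
  obtain ⟨G, hGnone, hGtop, hGbig⟩ := Stmt16Aux.exists_F e3 e' hrange' hIic'
  refine ⟨LinearOrder.lift' (Stmt16Aux.kfun F G) (Stmt16Aux.kfun_inj F G), ?_, ?_⟩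
  · intro S hS
    have hle : prodTop (filterTop p) (filterTop q) ≤
        ordTop (LinearOrder.lift' (Stmt16Aux.kfun F G) (Stmt16Aux.kfun_inj F G)) := by
      refine le_generateFrom ?_
      rintro s ⟨a, rfl | rfl⟩
      · exact Stmt16Aux.lower_ray_open hFnone hFtop hFbig hGnone hGtop hGbig a
      · exact Stmt16Aux.upper_ray_open hFnone hFtop hFbig hGnone hGtop hGbig a
    exact hle S hS
  · intro z
    exact Stmt16Aux.kfun_le_top hFnone hFtop hGnone hGtop z
end

section
/- Let X be a non-discrete orderable Hausdorff space such that the product X × X admits a separately continuous selection relation. Then ψ(X) = a(X). -/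
open Set

universe u v w y

section Helpers

variable {X : Type u}

/-- Openness in a ray-generated topology: every open set containing `p` contains a
left piece `(x, p]` or all of `(-∞, p]`. -/
lemma key1 (lt : X → X → Prop)
    (tri : ∀ a b : X, lt a b ∨ a = b ∨ lt b a)
    (tr : ∀ a b c : X, lt a b → lt b c → lt a c)
    (p : X) :
    ∀ U : Set X,
      TopologicalSpace.GenerateOpen
        {S : Set X | ∃ a, S = {z | lt z a} ∨ S = {z | lt a z}} U →
      p ∈ U →
      (∃ x, lt x p ∧ ∀ z, lt x z → ¬ lt p z → z ∈ U) ∨ (∀ z, ¬ lt p z → z ∈ U) := by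
  intro U hU
  induction hU with
  | basic S hS =>
    intro hp
    obtain ⟨a, h | h⟩ := hS
    · subst h
      right; intro z hz
      rcases tri z p with h' | h' | h'
      · exact tr _ _ _ h' hp
      · exact h' ▸ hp
      · exact absurd h' hz
    · subst h
      exact Or.inl ⟨a, hp, fun z hz _ => hz⟩
  | univ => exact fun _ => Or.inr fun z _ => trivial
  | inter U V hU hV ihU ihV =>
    intro hp
    rcases ihU hp.1 with ⟨x₁, hx₁, h₁⟩ | h₁
    · rcases ihV hp.2 with ⟨x₂, hx₂, h₂⟩ | h₂
      · rcases tri x₁ x₂ with h' | h' | h'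
        · exact Or.inl ⟨x₂, hx₂, fun z hz hz' => ⟨h₁ z (tr _ _ _ h' hz) hz', h₂ z hz hz'⟩⟩
        · subst h'
          exact Or.inl ⟨x₁, hx₁, fun z hz hz' => ⟨h₁ z hz hz', h₂ z hz hz'⟩⟩
        · exact Or.inl ⟨x₁, hx₁, fun z hz hz' => ⟨h₁ z hz hz', h₂ z (tr _ _ _ h' hz) hz'⟩⟩
      · exact Or.inl ⟨x₁, hx₁, fun z hz hz' => ⟨h₁ z hz hz', h₂ z hz'⟩⟩
    · rcases ihV hp.2 with ⟨x₂, hx₂, h₂⟩ | h₂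
      · exact Or.inl ⟨x₂, hx₂, fun z hz hz' => ⟨h₁ z hz', h₂ z hz hz'⟩⟩
      · exact Or.inr fun z hz => ⟨h₁ z hz, h₂ z hz⟩
  | sUnion S hS ih =>
    intro hp
    obtain ⟨T, hTS, hpT⟩ := hp
    rcases ih T hTS hpT with ⟨x, hx, h⟩ | h
    · exact Or.inl ⟨x, hx, fun z hz hz' => ⟨T, hTS, h z hz hz'⟩⟩
    · exact Or.inr fun z hz => ⟨T, hTS, h z hz⟩

/-- One-sided core lemma: if `p` is approached from the left in a ray-generated
topology, then `a(p) ≤ ψ(p)`. -/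
lemma key2' [t : TopologicalSpace X] [T1Space X] (lt : X → X → Prop)
    (tri : ∀ a b : X, lt a b ∨ a = b ∨ lt b a)
    (tr : ∀ a b c : X, lt a b → lt b c → lt a c)
    (irr : ∀ a : X, ¬ lt a a)
    (ht : t = TopologicalSpace.generateFrom
      {S : Set X | ∃ a, S = {z | lt z a} ∨ S = {z | lt a z}})
    (p : X) (hcl : p ∈ closure {z | lt z p}) :
    aNum t p ≤ psiNum t p := by
  classical
  have asym : ∀ {a b : X}, lt a b → ¬ lt b a := fun h h' => irr _ (tr _ _ _ h h')
  have hgen : ∀ U : Set X, t.IsOpen U → p ∈ U →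
      (∃ x, lt x p ∧ ∀ z, lt x z → ¬ lt p z → z ∈ U) ∨ (∀ z, ¬ lt p z → z ∈ U) := by
    intro U hU hp
    refine key1 lt tri tr p U ?_ hp
    rw [ht] at hU
    exact hU
  have hray : ∀ x : X, t.IsOpen {z | lt x z} := by
    intro x
    rw [ht]
    exact TopologicalSpace.GenerateOpen.basic _ ⟨x, Or.inr rfl⟩
  have hne : ∀ x : X, lt x p → ∃ z, lt x z ∧ lt z p := by
    intro x hx
    obtain ⟨z, hz1, hz2⟩ := mem_closure_iff.1 hcl {z | lt x z} (hray x) hx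
    exact ⟨z, hz1, hz2⟩
  have hne0 : ∃ z, lt z p := by
    obtain ⟨z, _, hz⟩ := mem_closure_iff.1 hcl Set.univ isOpen_univ trivial
    exact ⟨z, hz⟩
  have hSne : {c : Cardinal.{u} | ∃ Us : Set (Set X),
      (∀ V ∈ Us, t.IsOpen V) ∧ ⋂₀ Us = {p} ∧ c = Cardinal.mk ↥Us}.Nonempty := by
    refine ⟨_, {U : Set X | t.IsOpen U ∧ p ∈ U}, fun V hV => hV.1, ?_, rfl⟩
    apply subset_antisymm
    · intro z hz
      by_contra hzp
      have hzp' : ¬ z = p := fun h => hzp (h ▸ rfl)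
      exact (Set.mem_sInter.1 hz {z}ᶜ
        ⟨isOpen_compl_singleton, fun hm => hzp' (Set.mem_singleton_iff.1 hm).symm⟩) rfl
    · intro z hz
      rw [Set.mem_singleton_iff] at hz
      subst hz
      exact Set.mem_sInter.2 fun U hU => hU.2
  obtain ⟨Us, hUsOpen, hUsInt, hUscard⟩ := csInf_mem hSne
  have hpU : ∀ U ∈ Us, p ∈ U := by
    intro U hU
    have hp : p ∈ ⋂₀ Us := by rw [hUsInt]; rfl
    exact hp U hU
  have hUsne : Us.Nonempty := by
    rcases Set.eq_empty_or_nonempty Us with h | h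
    · exfalso
      obtain ⟨z, hz⟩ := hne0
      have hz2 : z ∈ ⋂₀ Us := by rw [h]; simp
      rw [hUsInt] at hz2
      exact irr p (Set.mem_singleton_iff.1 hz2 ▸ hz)
    · exact h
  have hchoice : ∀ U : ↥Us, ∃ a₀, lt a₀ p ∧ ∀ z, lt z p → z ∉ (U : Set X) → lt z a₀ := by
    intro U
    rcases hgen U (hUsOpen U U.2) (hpU U U.2) with ⟨x, hx, h⟩ | h
    · obtain ⟨a₀, hxa, hap⟩ := hne x hx
      refine ⟨a₀, hap, fun z hz hzU => ?_⟩
      have hxz : ¬ lt x z := fun hxz => hzU (h z hxz (asym hz))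
      rcases tri z x with h' | h' | h'
      · exact tr _ _ _ h' hxa
      · exact h' ▸ hxa
      · exact absurd h' hxz
    · obtain ⟨a₀, ha₀⟩ := hne0
      exact ⟨a₀, ha₀, fun z hz hzU => absurd (h z (asym hz)) hzU⟩
  choose f hf1 hf2 using hchoice
  have hpA : p ∉ Set.range f := by
    rintro ⟨U, hU⟩
    exact irr p (hU ▸ hf1 U)
  have hclA : p ∈ closure (Set.range f) := by
    rw [mem_closure_iff]
    intro O hO hpO
    rcases hgen O hO hpO with ⟨x, hx, h⟩ | h
    · obtain ⟨z', hxz', hz'p⟩ := hne x hx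
      have hz'ne : z' ∉ ({p} : Set X) := fun hm => irr p (Set.mem_singleton_iff.1 hm ▸ hz'p)
      have hz'i : z' ∉ ⋂₀ Us := fun hm => hz'ne (hUsInt ▸ hm)
      have hex : ∃ U ∈ Us, z' ∉ U := by
        by_contra hcc
        push_neg at hcc
        exact hz'i (Set.mem_sInter.2 hcc)
      obtain ⟨U, hU, hz'U⟩ := hex
      exact ⟨f ⟨U, hU⟩,
        h _ (tr _ _ _ hxz' (hf2 ⟨U, hU⟩ z' hz'p hz'U)) (asym (hf1 _)),
        Set.mem_range_self _⟩
    · obtain ⟨U, hU⟩ := hUsne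
      exact ⟨f ⟨U, hU⟩, h _ (asym (hf1 _)), Set.mem_range_self _⟩
  have h1 : aNum t p ≤ Cardinal.mk ↥(Set.range f) :=
    csInf_le' ⟨Set.range f, hpA, hclA, rfl⟩
  have h2 : Cardinal.mk ↥(Set.range f) ≤ Cardinal.mk ↥Us := Cardinal.mk_range_le
  have h3 : psiNum t p = Cardinal.mk ↥Us := hUscard
  rw [h3]
  exact h1.trans h2

/-- In an orderable Hausdorff space, `a(p) ≤ ψ(p)` at every non-isolated point. -/
lemma key2 [t : TopologicalSpace X] [T2Space X] (hord : Orderable t)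
    (p : X) (hni : ¬ t.IsOpen ({p} : Set X)) : aNum t p ≤ psiNum t p := by
  classical
  obtain ⟨r, hr⟩ := hord
  letI : LinearOrder X := r
  have tri : ∀ a b : X, a < b ∨ a = b ∨ b < a := lt_trichotomy
  have ht : t = TopologicalSpace.generateFrom
      {S : Set X | ∃ a, S = {z | z < a} ∨ S = {z | a < z}} := hr.symm
  by_cases hL : p ∈ closure {z : X | z < p}
  · exact key2' (fun a b => a < b) tri (fun _ _ _ h h' => lt_trans h h') lt_irrefl ht p hL
  · have hRcl : p ∈ closure {z : X | p < z} := by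
      by_contra hRc
      rw [mem_closure_iff] at hL hRc
      push_neg at hL hRc
      obtain ⟨O₁, hO₁, hpO₁, h₁⟩ := hL
      obtain ⟨O₂, hO₂, hpO₂, h₂⟩ := hRc
      apply hni
      have hOint : O₁ ∩ O₂ = {p} := by
        apply subset_antisymm
        · intro z hz
          rcases tri z p with h | h | h
          · exact absurd ⟨hz.1, h⟩ (Set.eq_empty_iff_forall_notMem.1 h₁ z)
          · exact h
          · exact absurd ⟨hz.2, h⟩ (Set.eq_empty_iff_forall_notMem.1 h₂ z)
        · intro z hz
          rw [Set.mem_singleton_iff] at hz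
          subst hz
          exact ⟨hpO₁, hpO₂⟩
      rw [← hOint]
      exact hO₁.inter hO₂
    have ht' : t = TopologicalSpace.generateFrom
        {S : Set X | ∃ a, S = {z | a < z} ∨ S = {z | z < a}} := by
      have hset : {S : Set X | ∃ a, S = {z | a < z} ∨ S = {z | z < a}} =
          {S : Set X | ∃ a, S = {z | z < a} ∨ S = {z | a < z}} := by
        ext S
        constructor
        · rintro ⟨a, h | h⟩
          · exact ⟨a, Or.inr h⟩
          · exact ⟨a, Or.inl h⟩
        · rintro ⟨a, h | h⟩
          · exact ⟨a, Or.inr h⟩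
          · exact ⟨a, Or.inl h⟩
      rw [hset]
      exact ht
    refine key2' (fun a b => b < a) ?_ (fun _ _ _ h h' => lt_trans h' h)
      (fun a => lt_irrefl a) ht' p hRcl
    intro a b
    rcases tri a b with h | h | h
    · exact Or.inr (Or.inr h)
    · exact Or.inr (Or.inl h)
    · exact Or.inl h

/-- Core lemma: if `X × X` carries a separately continuous selection relation and
`p ∈ closure D \ D` with `D` infinite, then `ψ(q) ≤ |D|` for every `q`. -/
lemma keyA [t : TopologicalSpace X]
    (R : X × X → X × X → Prop) (hRsel : SelRel R)
    (hc : SepCont (inferInstance : TopologicalSpace (X × X)) R)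
    (p : X) (D : Set X) (hpD : p ∉ D) (hcl : p ∈ closure D) (hD : D.Infinite)
    (q : X) : psiNum t q ≤ Cardinal.mk ↥D := by
  classical
  obtain ⟨htot, hanti⟩ := hRsel
  set G1 : X → Set X := fun a =>
    if R (q, a) (q, p) ∧ ((q, a) : X × X) ≠ (q, p) then
      {x : X | R (x, a) (q, p) ∧ ((x, a) : X × X) ≠ (q, p)}
    else
      {x : X | R (q, p) (x, a) ∧ ((q, p) : X × X) ≠ (x, a)} with hG1
  set G2 : X → Set X := fun a =>
    if R (q, p) (q, a) ∧ ((q, p) : X × X) ≠ (q, a) then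
      {x : X | R (x, p) (q, a) ∧ ((x, p) : X × X) ≠ (q, a)}
    else
      {x : X | R (q, a) (x, p) ∧ ((q, a) : X × X) ≠ (x, p)} with hG2
  have hG1open : ∀ a : X, IsOpen (G1 a) := by
    intro a
    rw [hG1]
    dsimp only
    split_ifs
    · exact IsOpen.preimage (continuous_id.prodMk continuous_const) (hc (q, p)).1
    · exact IsOpen.preimage (continuous_id.prodMk continuous_const) (hc (q, p)).2
  have hG2open : ∀ a : X, IsOpen (G2 a) := by
    intro a
    rw [hG2]
    dsimp only
    split_ifs
    · exact IsOpen.preimage (continuous_id.prodMk continuous_const) (hc (q, a)).1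
    · exact IsOpen.preimage (continuous_id.prodMk continuous_const) (hc (q, a)).2
  have hap : ∀ a ∈ D, a ≠ p := fun a ha h => hpD (h ▸ ha)
  have hq1 : ∀ a ∈ D, q ∈ G1 a := by
    intro a ha
    have hne : ((q, a) : X × X) ≠ (q, p) := fun h => hap a ha (congrArg Prod.snd h)
    rw [hG1]
    dsimp only
    split_ifs with h
    · exact h
    · rcases htot (q, a) (q, p) with h' | h'
      · exact absurd ⟨h', hne⟩ h
      · exact ⟨h', hne.symm⟩
  have hq2 : ∀ a ∈ D, q ∈ G2 a := by
    intro a ha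
    have hne : ((q, p) : X × X) ≠ (q, a) := fun h => hap a ha (congrArg Prod.snd h).symm
    rw [hG2]
    dsimp only
    split_ifs with h
    · exact h
    · rcases htot (q, p) (q, a) with h' | h'
      · exact absurd ⟨h', hne⟩ h
      · exact ⟨h', hne.symm⟩
  have hInter : ⋂₀ (G1 '' D ∪ G2 '' D) = {q} := by
    apply subset_antisymm
    · intro x hx
      rw [Set.mem_singleton_iff]
      by_contra hxq
      have hwu : ((x, p) : X × X) ≠ (q, p) := fun h => hxq (congrArg Prod.fst h)
      have hxG1 : ∀ a ∈ D, x ∈ G1 a := fun a ha =>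
        Set.mem_sInter.1 hx _ (Or.inl ⟨a, ha, rfl⟩)
      have hxG2 : ∀ a ∈ D, x ∈ G2 a := fun a ha =>
        Set.mem_sInter.1 hx _ (Or.inr ⟨a, ha, rfl⟩)
      rcases htot (x, p) (q, p) with hcase | hcase
      · -- (x,p) ≺ (q,p)
        obtain ⟨W, I, hW, hI, hxW, hpI, hWI⟩ :=
          isOpen_prod_iff.1 (hc (q, p)).1 x p ⟨hcase, hwu⟩
        obtain ⟨V, J, hV, hJ, hqV, hpJ, hVJ⟩ :=
          isOpen_prod_iff.1 (hc (x, p)).2 q p ⟨hcase, hwu⟩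
        obtain ⟨a, haIJ, haD⟩ :=
          mem_closure_iff.1 hcl (I ∩ J) (hI.inter hJ) ⟨hpI, hpJ⟩
        have hxa : R (x, a) (q, p) ∧ ((x, a) : X × X) ≠ (q, p) := hWI ⟨hxW, haIJ.1⟩
        have hqa : R (x, p) (q, a) ∧ ((x, p) : X × X) ≠ (q, a) := hVJ ⟨hqV, haIJ.2⟩
        have hx1 := hxG1 a haD
        have hx2 := hxG2 a haD
        rw [hG1] at hx1
        rw [hG2] at hx2
        dsimp only at hx1 hx2
        split_ifs at hx1 with hc1
        · split_ifs at hx2 with hc2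
          · exact hap a haD (congrArg Prod.snd (hanti _ _ hc1.1 hc2.1))
          · exact hap a haD (congrArg Prod.snd (hanti _ _ hx2.1 hqa.1))
        · exact hap a haD (congrArg Prod.snd (hanti _ _ hxa.1 hx1.1))
      · -- (q,p) ≺ (x,p)
        obtain ⟨W, I, hW, hI, hxW, hpI, hWI⟩ :=
          isOpen_prod_iff.1 (hc (q, p)).2 x p ⟨hcase, hwu.symm⟩
        obtain ⟨V, J, hV, hJ, hqV, hpJ, hVJ⟩ :=
          isOpen_prod_iff.1 (hc (x, p)).1 q p ⟨hcase, hwu.symm⟩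
        obtain ⟨a, haIJ, haD⟩ :=
          mem_closure_iff.1 hcl (I ∩ J) (hI.inter hJ) ⟨hpI, hpJ⟩
        have hxa : R (q, p) (x, a) ∧ ((q, p) : X × X) ≠ (x, a) := hWI ⟨hxW, haIJ.1⟩
        have hqa : R (q, a) (x, p) ∧ ((q, a) : X × X) ≠ (x, p) := hVJ ⟨hqV, haIJ.2⟩
        have hx1 := hxG1 a haD
        have hx2 := hxG2 a haD
        rw [hG1] at hx1
        rw [hG2] at hx2
        dsimp only at hx1 hx2
        split_ifs at hx1 with hc1
        · exact hxq (congrArg Prod.fst (hanti _ _ hx1.1 hxa.1))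
        · have hQ : R (q, p) (q, a) ∧ ((q, p) : X × X) ≠ (q, a) := by
            have hne : ((q, p) : X × X) ≠ (q, a) :=
              fun h => hap a haD (congrArg Prod.snd h).symm
            rcases htot (q, a) (q, p) with h' | h'
            · exact absurd ⟨h', hne.symm⟩ hc1
            · exact ⟨h', hne⟩
          rw [if_pos hQ] at hx2
          exact hxq (congrArg Prod.fst (hanti _ _ hx2.1 hqa.1))
    · intro z hz
      rw [Set.mem_singleton_iff] at hz
      subst hz
      refine Set.mem_sInter.2 ?_
      rintro V (⟨a, ha, rfl⟩ | ⟨a, ha, rfl⟩)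
      · exact hq1 a ha
      · exact hq2 a ha
  have hψ : psiNum t q ≤ Cardinal.mk ↥(G1 '' D ∪ G2 '' D) := by
    refine csInf_le' ⟨G1 '' D ∪ G2 '' D, ?_, hInter, rfl⟩
    rintro V (⟨a, _, rfl⟩ | ⟨a, _, rfl⟩)
    · exact hG1open a
    · exact hG2open a
  have hcard : Cardinal.mk ↥(G1 '' D ∪ G2 '' D) ≤ Cardinal.mk ↥D := by
    have h4 : (Cardinal.aleph0 : Cardinal.{u}) ≤ Cardinal.mk ↥D :=
      Cardinal.infinite_iff.1 hD.to_subtype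
    calc Cardinal.mk ↥(G1 '' D ∪ G2 '' D)
        ≤ Cardinal.mk ↥(G1 '' D) + Cardinal.mk ↥(G2 '' D) := Cardinal.mk_union_le _ _
      _ ≤ Cardinal.mk ↥D + Cardinal.mk ↥D :=
          add_le_add Cardinal.mk_image_le Cardinal.mk_image_le
      _ = Cardinal.mk ↥D := Cardinal.add_eq_self h4
  exact hψ.trans hcard

end Helpers

/-- If `X` is a non-discrete orderable Hausdorff space such that `X × X`
admits a separately continuous selection relation, then `ψ(X) = a(X)`. -/
theorem stmt19 {X : Type u} [t : TopologicalSpace X] [T2Space X]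
    (hord : Orderable t)
    (hnd : ∃ p : X, ¬ IsOpen ({p} : Set X))
    (hsel : ∃ R : X × X → X × X → Prop, SelRel R ∧
      SepCont (inferInstance : TopologicalSpace (X × X)) R) :
    psiSp t = aSp t := by
  classical
  obtain ⟨R, hRsel, hRcont⟩ := hsel
  have hSne : {c : Cardinal.{u} | ∃ p : X, ¬ t.IsOpen ({p} : Set X) ∧ c = aNum t p}.Nonempty := by
    obtain ⟨p, hp⟩ := hnd
    exact ⟨aNum t p, p, hp, rfl⟩
  obtain ⟨p₀, hp₀, hA0⟩ := csInf_mem hSne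
  have hTne : {c : Cardinal.{u} | ∃ A : Set X, p₀ ∉ A ∧ p₀ ∈ closure A ∧
      c = Cardinal.mk ↥A}.Nonempty := by
    refine ⟨_, ({p₀}ᶜ : Set X), by simp, ?_, rfl⟩
    rw [mem_closure_iff]
    intro o ho hpo
    by_contra h
    rw [Set.not_nonempty_iff_eq_empty] at h
    apply hp₀
    have ho' : o = {p₀} := by
      apply subset_antisymm
      · intro z hz
        by_contra hz'
        exact Set.eq_empty_iff_forall_notMem.1 h z ⟨hz, hz'⟩
      · intro z hz
        rw [Set.mem_singleton_iff] at hz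
        subst hz
        exact hpo
    exact ho' ▸ ho
  obtain ⟨D, hpD, hclD, hDcard⟩ := csInf_mem hTne
  have hDinf : D.Infinite := by
    by_contra hfin
    rw [Set.not_infinite] at hfin
    exact hpD (hfin.isClosed.closure_eq ▸ hclD)
  haveI : Nonempty X := ⟨p₀⟩
  have h1 : psiSp t ≤ aSp t := by
    have hall : ∀ q : X, psiNum t q ≤ Cardinal.mk ↥D := fun q =>
      keyA R hRsel hRcont p₀ D hpD hclD hDinf q
    have hcalc : (⨆ q : X, psiNum t q) ≤ Cardinal.mk ↥D := ciSup_le hall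
    have e1 : aNum t p₀ = Cardinal.mk ↥D := hDcard
    have e2 : aSp t = aNum t p₀ := hA0
    calc psiSp t = ⨆ q : X, psiNum t q := rfl
      _ ≤ Cardinal.mk ↥D := hcalc
      _ = aNum t p₀ := e1.symm
      _ = aSp t := e2.symm
  have h2 : aSp t ≤ psiSp t := by
    obtain ⟨p, hp⟩ := hnd
    have ha : aSp t ≤ aNum t p := csInf_le' ⟨p, hp, rfl⟩
    have hb : aNum t p ≤ psiNum t p := key2 hord p hp
    have hcup : psiNum t p ≤ psiSp t := le_ciSup (Cardinal.bddAbove_range _) p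
    exact ha.trans (hb.trans hcup)
  exact le_antisymm h1 h2
end
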